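/- arXiv:1509.03050 — 4 statements merged into one kernel-verified Lean document; each statement's English description precedes it below -/
import Mathlib

section
/- Let X : U → ℝ³ be a frontal with a non-degenerate singular point p = (0,0) of the first kind, and suppose the coordinates (u,v) are chosen so that the singular set of X near p equals {u = 0} and X_u = 0 on {u = 0} (so ξ := ∂_v extends the singular direction and ∂_u is null along the singular curve). Set a := −(X_v·X_{uu})/(X_v·X_v)(0,0) and b := −(X_v·(X_{uuu} + 3a X_{uv}))/(2 X_v·X_v)(0,0). Then the vector field η̃ := ∂_u + (a u + b u²)∂_v equals ∂_u on {u = 0} (hence is null along the singular curve) and satisfies (X_v · η̃²X)(0,0) = (X_v · η̃³X)(0,0) = 0. -/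
noncomputable section

open Set

/-- Euclidean inner product on `ℝ³`. -/
def dot3 (a b : Fin 3 → ℝ) : ℝ := a 0 * b 0 + a 1 * b 1 + a 2 * b 2

/-- Determinant of the 3×3 matrix with the given rows. -/
def det3 (a b c : Fin 3 → ℝ) : ℝ := Matrix.det (Matrix.of ![a, b, c])

/-- Partial derivative with respect to the first variable. -/
def pdU (X : ℝ × ℝ → Fin 3 → ℝ) (p : ℝ × ℝ) : Fin 3 → ℝ := fderiv ℝ X p ((1:ℝ), (0:ℝ))

/-- Partial derivative with respect to the second variable. -/
def pdV (X : ℝ × ℝ → Fin 3 → ℝ) (p : ℝ × ℝ) : Fin 3 → ℝ := fderiv ℝ X p ((0:ℝ), (1:ℝ))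

/-- Directional derivative of `X` along the vector field `ζ`. -/
def vfD (ζ : ℝ × ℝ → ℝ × ℝ) (X : ℝ × ℝ → Fin 3 → ℝ) : ℝ × ℝ → Fin 3 → ℝ :=
  fun p => fderiv ℝ X p (ζ p)

/-- `k`-fold iterated directional derivative of `X` along the vector field `ζ`. -/
def vfDIter (ζ : ℝ × ℝ → ℝ × ℝ) (k : ℕ) (X : ℝ × ℝ → Fin 3 → ℝ) : ℝ × ℝ → Fin 3 → ℝ :=
  (vfD ζ)^[k] X

/-- `p` is a singular point of `X` : the differential has rank < 2, i.e. the two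
partial derivative vectors are linearly dependent. -/
def IsSingularPt (X : ℝ × ℝ → Fin 3 → ℝ) (p : ℝ × ℝ) : Prop :=
  ¬ LinearIndependent ℝ ![pdU X p, pdV X p]

/-- `f` is a diffeomorphism from the open set `s` onto the open set `t`. -/
def IsDiffeoOn {E F : Type*} [NormedAddCommGroup E] [NormedSpace ℝ E]
    [NormedAddCommGroup F] [NormedSpace ℝ F] (f : E → F) (s : Set E) (t : Set F) : Prop :=
  IsOpen s ∧ IsOpen t ∧ ContDiffOn ℝ (⊤:ℕ∞) f s ∧ Set.BijOn f s t ∧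
    ∃ finv : F → E, ContDiffOn ℝ (⊤:ℕ∞) finv t ∧ (∀ x ∈ s, finv (f x) = x) ∧
      ∀ y ∈ t, f (finv y) = y

/-- `p` is a (2,5)-cuspidal edge of `X` (with domain `D`): up to diffeomorphisms of the
source (taking `0` to `p`, with image inside `D`) and of the target, `X` is
`(u,v) ↦ (u, v², v⁵)`. -/
def IsCuspidalEdge25 (D : Set (ℝ × ℝ)) (X : ℝ × ℝ → Fin 3 → ℝ) (p : ℝ × ℝ) : Prop :=
  ∃ (s t : Set (ℝ × ℝ)) (φ : ℝ × ℝ → ℝ × ℝ)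
    (s' t' : Set (Fin 3 → ℝ)) (Φ : (Fin 3 → ℝ) → (Fin 3 → ℝ)),
    ((0:ℝ), (0:ℝ)) ∈ s ∧ φ ((0:ℝ), (0:ℝ)) = p ∧ t ⊆ D ∧ IsDiffeoOn φ s t ∧
    X p ∈ s' ∧ IsDiffeoOn Φ s' t' ∧
    ∀ w ∈ s, X (φ w) ∈ s' ∧ Φ (X (φ w)) = ![w.1, w.2 ^ 2, w.2 ^ 5]

/-- `X` is a frontal on the open set `U` : it is smooth and locally admits a smooth unit
normal vector field orthogonal to both partial derivatives. -/
def IsFrontalOn (X : ℝ × ℝ → Fin 3 → ℝ) (U : Set (ℝ × ℝ)) : Prop :=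
  ContDiffOn ℝ (⊤:ℕ∞) X U ∧ ∀ q ∈ U, ∃ V, IsOpen V ∧ q ∈ V ∧ V ⊆ U ∧
    ∃ n : ℝ × ℝ → Fin 3 → ℝ, ContDiffOn ℝ (⊤:ℕ∞) n V ∧
      ∀ x ∈ V, dot3 (n x) (n x) = 1 ∧ dot3 (n x) (pdU X x) = 0 ∧ dot3 (n x) (pdV X x) = 0

/-- `p` is a non-degenerate singular point of `X` : it is singular and the signed area
density `λ = det(X_u, X_v, n)` (for a local unit normal `n`) has nonvanishing
differential at `p`. -/
def IsNondegSing (X : ℝ × ℝ → Fin 3 → ℝ) (U : Set (ℝ × ℝ)) (p : ℝ × ℝ) : Prop :=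
  IsSingularPt X p ∧ ∃ V, IsOpen V ∧ p ∈ V ∧ V ⊆ U ∧
    ∃ n : ℝ × ℝ → Fin 3 → ℝ, ContDiffOn ℝ (⊤:ℕ∞) n V ∧
      (∀ x ∈ V, dot3 (n x) (n x) = 1 ∧ dot3 (n x) (pdU X x) = 0 ∧
        dot3 (n x) (pdV X x) = 0) ∧
      fderiv ℝ (fun x => det3 (pdU X x) (pdV X x) (n x)) p ≠ 0

set_option maxHeartbeats 1000000 in
private lemma dot3_add' (v x y : Fin 3 → ℝ) : dot3 v (x + y) = dot3 v x + dot3 v y := by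
  simp [dot3]; ring

private lemma dot3_smul' (v : Fin 3 → ℝ) (c : ℝ) (x : Fin 3 → ℝ) :
    dot3 v (c • x) = c * dot3 v x := by
  simp [dot3]; ring

private lemma dot3_self_ne_zero {v : Fin 3 → ℝ} (h : v ≠ 0) : dot3 v v ≠ 0 := by
  intro h0
  apply h
  have h0' : v 0 * v 0 + v 1 * v 1 + v 2 * v 2 = 0 := h0
  funext i
  fin_cases i <;> simp <;>
    nlinarith [mul_self_nonneg (v 0), mul_self_nonneg (v 1), mul_self_nonneg (v 2)]

set_option maxHeartbeats 1000000 in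
/-- In adapted coordinates (singular set `{u = 0}`, `X_u = 0` there), the explicit vector
field `η̃ = ∂_u + (au + bu²)∂_v` is null along the singular curve and satisfies the
normalization conditions `(X_v·η̃²X)(0,0) = (X_v·η̃³X)(0,0) = 0`. -/
theorem special_null_field_formula
    (U : Set (ℝ × ℝ)) (hU : IsOpen U)
    (X : ℝ × ℝ → Fin 3 → ℝ) (hfr : IsFrontalOn X U)
    (hp : ((0:ℝ), (0:ℝ)) ∈ U)
    (hnd : IsNondegSing X U ((0:ℝ), (0:ℝ)))
    -- the singular set of X near p = (0,0) equals {u = 0}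
    (hsingset : ∃ V, IsOpen V ∧ ((0:ℝ), (0:ℝ)) ∈ V ∧ V ⊆ U ∧
      ∀ q ∈ V, (IsSingularPt X q ↔ q.1 = 0))
    -- X_u = 0 on {u = 0}
    (hXu : ∀ q ∈ U, q.1 = 0 → pdU X q = 0)
    -- p is of the first kind: ∂_u is the null direction, so rank dX_p = 1, i.e. X_v(0,0) ≠ 0
    (hXv : pdV X ((0:ℝ), (0:ℝ)) ≠ 0)
    (a b : ℝ)
    (ha : a = -(dot3 (pdV X ((0:ℝ), (0:ℝ)))
        (vfDIter (fun _ => ((1:ℝ), (0:ℝ))) 2 X ((0:ℝ), (0:ℝ)))) /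
      dot3 (pdV X ((0:ℝ), (0:ℝ))) (pdV X ((0:ℝ), (0:ℝ))))
    (hb : b = -(dot3 (pdV X ((0:ℝ), (0:ℝ)))
        (vfDIter (fun _ => ((1:ℝ), (0:ℝ))) 3 X ((0:ℝ), (0:ℝ)) +
          (3 * a) • vfD (fun _ => ((1:ℝ), (0:ℝ)))
            (vfD (fun _ => ((0:ℝ), (1:ℝ))) X) ((0:ℝ), (0:ℝ)))) /
      (2 * dot3 (pdV X ((0:ℝ), (0:ℝ))) (pdV X ((0:ℝ), (0:ℝ)))))
    (ηt : ℝ × ℝ → ℝ × ℝ)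
    (hηt : ηt = fun q => ((1:ℝ), a * q.1 + b * q.1 ^ 2)) :
    (∀ q : ℝ × ℝ, q.1 = 0 → ηt q = ((1:ℝ), (0:ℝ))) ∧
    dot3 (pdV X ((0:ℝ), (0:ℝ))) (vfDIter ηt 2 X ((0:ℝ), (0:ℝ))) = 0 ∧
    dot3 (pdV X ((0:ℝ), (0:ℝ))) (vfDIter ηt 3 X ((0:ℝ), (0:ℝ))) = 0 := by
  have part1 : ∀ q : ℝ × ℝ, q.1 = 0 → ηt q = ((1:ℝ), (0:ℝ)) := by
    intro q hq; rw [hηt]; simp [hq]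
  -- notation
  set z : ℝ × ℝ := ((0:ℝ), (0:ℝ)) with hzdef
  set e1 : ℝ × ℝ := ((1:ℝ), (0:ℝ)) with he1def
  set e2 : ℝ × ℝ := ((0:ℝ), (1:ℝ)) with he2def
  -- smoothness facts
  have hXC : ∀ p ∈ U, ContDiffAt ℝ (⊤:ℕ∞) X p := fun p h => hfr.1.contDiffAt (hU.mem_nhds h)
  have hF1C : ∀ p ∈ U, ContDiffAt ℝ (⊤:ℕ∞) (fderiv ℝ X) p :=
    fun p h => (hXC p h).fderiv_right (by simp)
  have hF1d : ∀ p ∈ U, DifferentiableAt ℝ (fderiv ℝ X) p :=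
    fun p h => (hF1C p h).differentiableAt (by simp)
  have hF2C : ContDiffAt ℝ (⊤:ℕ∞) (fderiv ℝ (fderiv ℝ X)) z :=
    (hF1C z hp).fderiv_right (by simp)
  have hF2d : DifferentiableAt ℝ (fderiv ℝ (fderiv ℝ X)) z :=
    hF2C.differentiableAt (by simp)
  have hsymm : fderiv ℝ (fderiv ℝ X) z e2 e1 = fderiv ℝ (fderiv ℝ X) z e1 e2 :=
    ((hXC z hp).isSymmSndFDerivAt (by rw [minSmoothness_of_isRCLikeNormedField]; exact WithTop.coe_le_coe.mpr le_top)).eq e2 e1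
  -- derivative of ηt
  have hηtD : ∀ q : ℝ × ℝ, HasFDerivAt ηt
      (ContinuousLinearMap.prod 0 ((a + 2*b*q.1) • ContinuousLinearMap.fst ℝ ℝ ℝ)) q := by
    intro q
    rw [hηt]
    have hf : HasFDerivAt (fun p : ℝ × ℝ => p.1) (ContinuousLinearMap.fst ℝ ℝ ℝ) q :=
      hasFDerivAt_fst
    have h2 := (hf.const_mul a).add ((hf.mul hf).const_mul b)
    refine HasFDerivAt.prodMk (hasFDerivAt_const (1:ℝ) q) ?_
    convert h2 using 1
    · funext p; show _ = a * p.1 + b * (p.1 * p.1); ring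
    · refine ContinuousLinearMap.ext fun w => ?_
      simp
      ring
  have hηtd : ∀ q, DifferentiableAt ℝ ηt q := fun q => (hηtD q).differentiableAt
  have hDηt : ∀ q : ℝ × ℝ, fderiv ℝ ηt q =
      ContinuousLinearMap.prod 0 ((a + 2*b*q.1) • ContinuousLinearMap.fst ℝ ℝ ℝ) :=
    fun q => (hηtD q).fderiv
  have hηt0 : ηt z = e1 := part1 z rfl
  have hDηt0e1 : fderiv ℝ ηt z e1 = ((0:ℝ), a) := by
    rw [hDηt]; simp [hzdef, he1def]
  -- key2 : second iterated derivative at the origin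
  have he2a : ((0:ℝ), a) = a • e2 := by simp [he2def]
  have key2 : vfDIter ηt 2 X z = fderiv ℝ (fderiv ℝ X) z e1 e1 + a • fderiv ℝ X z e2 := by
    show fderiv ℝ (fun p => fderiv ℝ X p (ηt p)) z (ηt z) = _
    rw [hηt0, fderiv_clm_apply (hF1d z hp) (hηtd z)]
    simp only [ContinuousLinearMap.add_apply, ContinuousLinearMap.coe_comp',
      Function.comp_apply, ContinuousLinearMap.flip_apply]
    rw [hDηt0e1, hηt0, he2a, map_smul]
    rw [add_comm]
  -- constant-field iterated derivatives
  have hXuu : vfDIter (fun _ => e1) 2 X z = fderiv ℝ (fderiv ℝ X) z e1 e1 := by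
    show fderiv ℝ (fun p => fderiv ℝ X p e1) z e1 = _
    rw [fderiv_clm_apply (hF1d z hp) (differentiableAt_const e1)]
    simp
  have hM : vfD (fun _ => e1) (vfD (fun _ => e2) X) z = fderiv ℝ (fderiv ℝ X) z e1 e2 := by
    show fderiv ℝ (fun q => fderiv ℝ X q e2) z e1 = _
    rw [fderiv_clm_apply (hF1d z hp) (differentiableAt_const e2)]
    simp
  have hXuuu : vfDIter (fun _ => e1) 3 X z = fderiv ℝ (fderiv ℝ (fderiv ℝ X)) z e1 e1 e1 := by
    have hmid : ∀ p ∈ U, vfD (fun _ => e1) (vfD (fun _ => e1) X) p =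
        fderiv ℝ (fderiv ℝ X) p e1 e1 := by
      intro p hpU
      show fderiv ℝ (fun q => fderiv ℝ X q e1) p e1 = _
      rw [fderiv_clm_apply (hF1d p hpU) (differentiableAt_const e1)]
      simp
    have hev : vfD (fun _ => e1) (vfD (fun _ => e1) X) =ᶠ[nhds z]
        (fun p => fderiv ℝ (fderiv ℝ X) p e1 e1) := by
      filter_upwards [hU.mem_nhds hp] with p hpU using hmid p hpU
    show fderiv ℝ (vfD (fun _ => e1) (vfD (fun _ => e1) X)) z e1 = _
    rw [hev.fderiv_eq]
    have hc : DifferentiableAt ℝ (fun p => fderiv ℝ (fderiv ℝ X) p e1) z :=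
      hF2d.clm_apply (differentiableAt_const e1)
    rw [fderiv_clm_apply hc (differentiableAt_const e1)]
    simp only [ContinuousLinearMap.add_apply, ContinuousLinearMap.coe_comp',
      Function.comp_apply, ContinuousLinearMap.flip_apply]
    rw [fderiv_clm_apply hF2d (differentiableAt_const e1)]
    simp
  -- derivative of the auxiliary coefficient function
  have hu2D : HasFDerivAt (fun p : ℝ × ℝ => ((0:ℝ), a + 2*b*p.1))
      (ContinuousLinearMap.prod 0 ((2*b) • ContinuousLinearMap.fst ℝ ℝ ℝ)) z := by
    have hf : HasFDerivAt (fun p : ℝ × ℝ => p.1) (ContinuousLinearMap.fst ℝ ℝ ℝ) z :=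
      hasFDerivAt_fst
    refine HasFDerivAt.prodMk (hasFDerivAt_const (0:ℝ) z) ?_
    have h2 := (hasFDerivAt_const a z).add (hf.const_mul (2*b))
    convert h2 using 1
    · rfl
    refine ContinuousLinearMap.ext fun w => ?_
    simp
  -- pointwise formula for the second iterated derivative
  have hY2eq : ∀ p ∈ U, vfD ηt (vfD ηt X) p =
      fderiv ℝ X p ((0:ℝ), a + 2*b*p.1) + fderiv ℝ (fderiv ℝ X) p (ηt p) (ηt p) := by
    intro p hpU
    show fderiv ℝ (fun q => fderiv ℝ X q (ηt q)) p (ηt p) = _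
    rw [fderiv_clm_apply (hF1d p hpU) (hηtd p)]
    simp only [ContinuousLinearMap.add_apply, ContinuousLinearMap.coe_comp',
      Function.comp_apply, ContinuousLinearMap.flip_apply]
    have hval : fderiv ℝ ηt p (ηt p) = ((0:ℝ), a + 2*b*p.1) := by
      rw [hDηt p, hηt]; simp
    rw [hval]
  have hev2 : vfD ηt (vfD ηt X) =ᶠ[nhds z]
      (fun p => fderiv ℝ X p ((0:ℝ), a + 2*b*p.1) + fderiv ℝ (fderiv ℝ X) p (ηt p) (ηt p)) := by
    filter_upwards [hU.mem_nhds hp] with p hpU using hY2eq p hpU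
  have hdiffA : DifferentiableAt ℝ (fun p : ℝ × ℝ => fderiv ℝ X p ((0:ℝ), a + 2*b*p.1)) z :=
    (hF1d z hp).clm_apply hu2D.differentiableAt
  have hdiffB : DifferentiableAt ℝ
      (fun p : ℝ × ℝ => fderiv ℝ (fderiv ℝ X) p (ηt p) (ηt p)) z :=
    (hF2d.clm_apply (hηtd z)).clm_apply (hηtd z)
  have hA : fderiv ℝ (fun p : ℝ × ℝ => fderiv ℝ X p ((0:ℝ), a + 2*b*p.1)) z e1
      = (2*b) • fderiv ℝ X z e2 + a • fderiv ℝ (fderiv ℝ X) z e1 e2 := by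
    rw [fderiv_clm_apply (hF1d z hp) hu2D.differentiableAt, hu2D.fderiv]
    simp only [ContinuousLinearMap.add_apply, ContinuousLinearMap.coe_comp',
      Function.comp_apply, ContinuousLinearMap.flip_apply]
    have h1 : (ContinuousLinearMap.prod (0:(ℝ×ℝ) →L[ℝ] ℝ)
        ((2*b) • ContinuousLinearMap.fst ℝ ℝ ℝ)) e1 = ((2*b) • e2 : ℝ × ℝ) := by
      simp [he1def, he2def]
    have h2 : ((0:ℝ), a + 2*b*z.1) = (a • e2 : ℝ × ℝ) := by
      simp [hzdef, he2def]
    rw [h1, h2, map_smul, map_smul]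
  have hB : fderiv ℝ (fun p : ℝ × ℝ => fderiv ℝ (fderiv ℝ X) p (ηt p) (ηt p)) z e1
      = a • fderiv ℝ (fderiv ℝ X) z e1 e2 +
        (a • fderiv ℝ (fderiv ℝ X) z e2 e1 +
          fderiv ℝ (fderiv ℝ (fderiv ℝ X)) z e1 e1 e1) := by
    rw [fderiv_clm_apply (hF2d.clm_apply (hηtd z)) (hηtd z)]
    simp only [ContinuousLinearMap.add_apply, ContinuousLinearMap.coe_comp',
      Function.comp_apply, ContinuousLinearMap.flip_apply]
    rw [fderiv_clm_apply hF2d (hηtd z)]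
    simp only [ContinuousLinearMap.add_apply, ContinuousLinearMap.coe_comp',
      Function.comp_apply, ContinuousLinearMap.flip_apply]
    rw [hDηt0e1, hηt0, he2a, map_smul, map_smul]
    simp [ContinuousLinearMap.smul_apply]
  have key3 : vfDIter ηt 3 X z =
      ((2*b) • fderiv ℝ X z e2 + a • fderiv ℝ (fderiv ℝ X) z e1 e2) +
      (a • fderiv ℝ (fderiv ℝ X) z e1 e2 +
        (a • fderiv ℝ (fderiv ℝ X) z e2 e1 +
          fderiv ℝ (fderiv ℝ (fderiv ℝ X)) z e1 e1 e1)) := by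
    show fderiv ℝ (vfD ηt (vfD ηt X)) z (ηt z) = _
    rw [hηt0, hev2.fderiv_eq, fderiv_fun_add hdiffA hdiffB, ContinuousLinearMap.add_apply, hA, hB]
  -- final arithmetic
  have hd : dot3 (pdV X z) (pdV X z) ≠ 0 := dot3_self_ne_zero hXv
  have hpdV : fderiv ℝ X z e2 = pdV X z := rfl
  refine ⟨part1, ?_, ?_⟩
  · rw [hXuu] at ha
    rw [key2, dot3_add', dot3_smul', hpdV, ha]
    field_simp
    ring
  · rw [hXuuu, hM] at hb
    rw [dot3_add', dot3_smul'] at hb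
    rw [key3]
    simp only [dot3_add', dot3_smul']
    rw [hsymm, hpdV, hb]
    field_simp
    ring
end
end

section
/- Let X : U → ℝ³ be a frontal, p a non-degenerate singular point of the first kind, γ(t) (|t| < ε) the singular curve through p, and ξ, η extensions of γ' and of a null vector field along γ. Let ξ̄ = a₁ξ + a₂η and η̄ = b₁ξ + b₂η, where a₁, a₂, b₁, b₂ are smooth functions such that a₂ = b₁ = 0 on the singular set and a₁, b₂ are nowhere zero on the singular set. Then det(ξX, η²X, η³X)(γ(t)) = 0 for all |t| < ε if and only if det(ξ̄X, η̄²X, η̄³X)(γ(t)) = 0 for all |t| < ε. -/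
noncomputable section

open Set

private lemma diffAt_of_cd {E F : Type*} [NormedAddCommGroup E] [NormedSpace ℝ E]
    [NormedAddCommGroup F] [NormedSpace ℝ F] {f : E → F} {U : Set E}
    (hU : IsOpen U) (h : ContDiffOn ℝ (⊤:ℕ∞) f U) {q : E} (hq : q ∈ U) :
    DifferentiableAt ℝ f q :=
  (h.contDiffAt (hU.mem_nhds hq)).differentiableAt (by simp)

private lemma cd_fderiv {E F : Type*} [NormedAddCommGroup E] [NormedSpace ℝ E]
    [NormedAddCommGroup F] [NormedSpace ℝ F] {f : E → F} {U : Set E}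
    (hU : IsOpen U) (h : ContDiffOn ℝ (⊤:ℕ∞) f U) :
    ContDiffOn ℝ (⊤:ℕ∞) (fderiv ℝ f) U :=
  h.fderiv_of_isOpen hU (by exact_mod_cast le_top)

private lemma cd_vfD {X : ℝ × ℝ → Fin 3 → ℝ} {ζ : ℝ × ℝ → ℝ × ℝ} {U : Set (ℝ × ℝ)}
    (hU : IsOpen U) (hX : ContDiffOn ℝ (⊤:ℕ∞) X U) (hζ : ContDiffOn ℝ (⊤:ℕ∞) ζ U) :
    ContDiffOn ℝ (⊤:ℕ∞) (vfD ζ X) U :=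
  (cd_fderiv hU hX).clm_apply hζ

private lemma det3_eq (a b c : Fin 3 → ℝ) :
    det3 a b c = a 0 * b 1 * c 2 - a 0 * b 2 * c 1 - a 1 * b 0 * c 2
      + a 1 * b 2 * c 0 + a 2 * b 0 * c 1 - a 2 * b 1 * c 0 := by
  simp [det3, Matrix.det_fin_three]

private lemma det3_tri (a b c : Fin 3 → ℝ) (x p y q r z : ℝ) :
    det3 (x • a) (p • a + y • b) (q • a + r • b + z • c) = x * y * z * det3 a b c := by
  simp only [det3_eq, Pi.add_apply, Pi.smul_apply, smul_eq_mul]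
  ring

private lemma det3_zero_left (b c : Fin 3 → ℝ) : det3 (0 : Fin 3 → ℝ) b c = 0 := by
  simp [det3_eq]

private lemma span_lemma {T : (ℝ × ℝ) →L[ℝ] (Fin 3 → ℝ)} {e k : ℝ × ℝ}
    (hk : k ≠ 0) (hTk : T k = 0) (hTe : T e ≠ 0) (w : ℝ × ℝ) :
    ∃ μ : ℝ, T w = μ • T e := by
  have hδ : e.1 * k.2 - e.2 * k.1 ≠ 0 := by
    intro h0
    have hk' : k.1 ≠ 0 ∨ k.2 ≠ 0 := by
      by_contra hc
      push_neg at hc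
      exact hk (Prod.ext hc.1 hc.2)
    apply hTe
    rcases hk' with h1 | h2
    · have he : e = (e.1 / k.1) • k := by
        apply Prod.ext
        · simp only [Prod.smul_fst, smul_eq_mul]
          field_simp
        · simp only [Prod.smul_snd, smul_eq_mul]
          field_simp
          linarith [h0]
      rw [he, map_smul, hTk, smul_zero]
    · have he : e = (e.2 / k.2) • k := by
        apply Prod.ext
        · simp only [Prod.smul_fst, smul_eq_mul]
          field_simp
          linarith [h0]
        · simp only [Prod.smul_snd, smul_eq_mul]
          field_simp
      rw [he, map_smul, hTk, smul_zero]
  refine ⟨(w.1 * k.2 - w.2 * k.1) / (e.1 * k.2 - e.2 * k.1), ?_⟩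
  have hw : w = ((w.1 * k.2 - w.2 * k.1) / (e.1 * k.2 - e.2 * k.1)) • e
      + ((e.1 * w.2 - e.2 * w.1) / (e.1 * k.2 - e.2 * k.1)) • k := by
    apply Prod.ext
    · simp only [Prod.fst_add, Prod.smul_fst, smul_eq_mul]
      rw [div_mul_eq_mul_div, div_mul_eq_mul_div, ← add_div, eq_div_iff hδ]
      ring
    · simp only [Prod.snd_add, Prod.smul_snd, smul_eq_mul]
      rw [div_mul_eq_mul_div, div_mul_eq_mul_div, ← add_div, eq_div_iff hδ]
      ring
  rw [show T w = T (((w.1 * k.2 - w.2 * k.1) / (e.1 * k.2 - e.2 * k.1)) • e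
      + ((e.1 * w.2 - e.2 * w.1) / (e.1 * k.2 - e.2 * k.1)) • k) from by rw [← hw],
    map_add, map_smul, map_smul, hTk, smul_zero, add_zero]


/-- The first criterion condition is independent of the choice of ξ and η. -/
theorem condition3_independent_of_fields
    (U : Set (ℝ × ℝ)) (hU : IsOpen U)
    (X : ℝ × ℝ → Fin 3 → ℝ) (hfr : IsFrontalOn X U)
    (p : ℝ × ℝ) (hp : p ∈ U) (hnd : IsNondegSing X U p)
    -- the singular curve γ(t), |t| < ε, through p = γ(0)
    (ε : ℝ) (hε : 0 < ε) (γ : ℝ → ℝ × ℝ)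
    (hγmem : ∀ t ∈ Set.Ioo (-ε) ε, γ t ∈ U)
    (hγsm : ContDiffOn ℝ (⊤:ℕ∞) γ (Set.Ioo (-ε) ε))
    (hγ0 : γ 0 = p)
    (hγreg : ∀ t ∈ Set.Ioo (-ε) ε, deriv γ t ≠ 0)
    (hγsing : ∃ W, IsOpen W ∧ p ∈ W ∧ W ⊆ U ∧
      ∀ q ∈ W, (IsSingularPt X q ↔ q ∈ γ '' Set.Ioo (-ε) ε))
    -- a null vector field η₀ along γ
    (η₀ : ℝ → ℝ × ℝ) (hη₀sm : ContDiffOn ℝ (⊤:ℕ∞) η₀ (Set.Ioo (-ε) ε))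
    (hη₀ : ∀ t ∈ Set.Ioo (-ε) ε, η₀ t ≠ 0 ∧ fderiv ℝ X (γ t) (η₀ t) = 0)
    -- p is of the first kind
    (hfirst : LinearIndependent ℝ ![deriv γ 0, η₀ 0])
    -- ξ, η : smooth extensions of γ' and of the null vector field η₀
    (ξ η : ℝ × ℝ → ℝ × ℝ)
    (hξsm : ContDiffOn ℝ (⊤:ℕ∞) ξ U) (hηsm : ContDiffOn ℝ (⊤:ℕ∞) η U)
    (hξγ : ∀ t ∈ Set.Ioo (-ε) ε, ξ (γ t) = deriv γ t)
    (hηγ : ∀ t ∈ Set.Ioo (-ε) ε, η (γ t) = η₀ t)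
    -- change of extensions: ξ̄ = a₁ξ + a₂η, η̄ = b₁ξ + b₂η
    (a₁ a₂ b₁ b₂ : ℝ × ℝ → ℝ)
    (ha₁ : ContDiffOn ℝ (⊤:ℕ∞) a₁ U) (ha₂ : ContDiffOn ℝ (⊤:ℕ∞) a₂ U)
    (hb₁ : ContDiffOn ℝ (⊤:ℕ∞) b₁ U) (hb₂ : ContDiffOn ℝ (⊤:ℕ∞) b₂ U)
    (hcoef : ∀ t ∈ Set.Ioo (-ε) ε,
      a₂ (γ t) = 0 ∧ b₁ (γ t) = 0 ∧ a₁ (γ t) ≠ 0 ∧ b₂ (γ t) ≠ 0)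
    (ξb ηb : ℝ × ℝ → ℝ × ℝ)
    (hξb : ∀ q, ξb q = a₁ q • ξ q + a₂ q • η q)
    (hηb : ∀ q, ηb q = b₁ q • ξ q + b₂ q • η q) :
    (∀ t ∈ Set.Ioo (-ε) ε,
        det3 (vfD ξ X (γ t)) (vfDIter η 2 X (γ t)) (vfDIter η 3 X (γ t)) = 0) ↔
    (∀ t ∈ Set.Ioo (-ε) ε,
        det3 (vfD ξb X (γ t)) (vfDIter ηb 2 X (γ t)) (vfDIter ηb 3 X (γ t)) = 0) := by
  obtain ⟨hXsm, -⟩ := hfr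
  -- smoothness of the various fields
  have hηbsm : ContDiffOn ℝ (⊤:ℕ∞) ηb U := by
    have h : ηb = fun p => b₁ p • ξ p + b₂ p • η p := funext hηb
    rw [h]; exact (hb₁.smul hξsm).add (hb₂.smul hηsm)
  have hF : ContDiffOn ℝ (⊤:ℕ∞) (vfD ξ X) U := cd_vfD hU hXsm hξsm
  have hG : ContDiffOn ℝ (⊤:ℕ∞) (vfD η X) U := cd_vfD hU hXsm hηsm
  have hG2 : ContDiffOn ℝ (⊤:ℕ∞) (vfD η (vfD η X)) U := cd_vfD hU hG hηsm
  have hFg : ContDiffOn ℝ (⊤:ℕ∞) (vfD ξ (vfD η X)) U := cd_vfD hU hG hξsm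
  have hF' : ContDiffOn ℝ (⊤:ℕ∞) (vfD ηb (vfD ξ X)) U := cd_vfD hU hF hηbsm
  have hG' : ContDiffOn ℝ (⊤:ℕ∞) (vfD ηb (vfD η X)) U := cd_vfD hU hG hηbsm
  have hβ₁ : ContDiffOn ℝ (⊤:ℕ∞) (fun p => fderiv ℝ b₁ p (ηb p)) U :=
    (cd_fderiv hU hb₁).clm_apply hηbsm
  have hβ₂ : ContDiffOn ℝ (⊤:ℕ∞) (fun p => fderiv ℝ b₂ p (ηb p)) U :=
    (cd_fderiv hU hb₂).clm_apply hηbsm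
  -- pointwise facts along the singular curve
  have hGγ : ∀ s ∈ Set.Ioo (-ε) ε, vfD η X (γ s) = 0 := by
    intro s hs
    show fderiv ℝ X (γ s) (η (γ s)) = 0
    rw [hηγ s hs]
    exact (hη₀ s hs).2
  -- ξ(ηX) vanishes along γ : chain rule along the curve
  have hFgγ : ∀ s ∈ Set.Ioo (-ε) ε, vfD ξ (vfD η X) (γ s) = 0 := by
    intro s hs
    have hq : γ s ∈ U := hγmem s hs
    have hγd : HasDerivAt γ (deriv γ s) s :=
      ((hγsm.contDiffAt (isOpen_Ioo.mem_nhds hs)).differentiableAt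
        (by simp)).hasDerivAt
    have hGd : HasFDerivAt (vfD η X) (fderiv ℝ (vfD η X) (γ s)) (γ s) :=
      (diffAt_of_cd hU hG hq).hasFDerivAt
    have hcomp : HasDerivAt ((vfD η X) ∘ γ) (fderiv ℝ (vfD η X) (γ s) (deriv γ s)) s :=
      hGd.comp_hasDerivAt s hγd
    have hzero : HasDerivAt ((vfD η X) ∘ γ) 0 s := by
      have hev : ((vfD η X) ∘ γ) =ᶠ[nhds s] fun _ => (0 : Fin 3 → ℝ) := by
        filter_upwards [isOpen_Ioo.mem_nhds hs] with u hu
        exact hGγ u hu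
      exact (hasDerivAt_const s (0 : Fin 3 → ℝ)).congr_of_eventuallyEq hev
    have huniq : fderiv ℝ (vfD η X) (γ s) (deriv γ s) = 0 := hcomp.unique hzero
    show fderiv ℝ (vfD η X) (γ s) (ξ (γ s)) = 0
    rw [hξγ s hs]
    exact huniq
  -- ηbX = b₁ • ξX + b₂ • ηX (everywhere)
  have hHbfun : vfD ηb X = fun p => b₁ p • vfD ξ X p + b₂ p • vfD η X p := by
    funext p
    show fderiv ℝ X p (ηb p) = _
    rw [hηb p, map_add, map_smul, map_smul]
    rfl
  have hG'fun : vfD ηb (vfD η X)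
      = fun p => b₁ p • vfD ξ (vfD η X) p + b₂ p • vfD η (vfD η X) p := by
    funext p
    show fderiv ℝ (vfD η X) p (ηb p) = _
    rw [hηb p, map_add, map_smul, map_smul]
    rfl
  -- the second derivative ηb²X on all of U, via the product rule
  have hH2bU : ∀ p ∈ U, vfD ηb (vfD ηb X) p =
      fderiv ℝ b₁ p (ηb p) • vfD ξ X p + b₁ p • vfD ηb (vfD ξ X) p
      + (fderiv ℝ b₂ p (ηb p) • vfD η X p + b₂ p • vfD ηb (vfD η X) p) := by
    intro p hp
    have d₁ : DifferentiableAt ℝ b₁ p := diffAt_of_cd hU hb₁ hp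
    have d₂ : DifferentiableAt ℝ b₂ p := diffAt_of_cd hU hb₂ hp
    have dF : DifferentiableAt ℝ (vfD ξ X) p := diffAt_of_cd hU hF hp
    have dG : DifferentiableAt ℝ (vfD η X) p := diffAt_of_cd hU hG hp
    show fderiv ℝ (vfD ηb X) p (ηb p) = _
    rw [hHbfun, fderiv_fun_add (d₁.fun_smul dF) (d₂.fun_smul dG), ContinuousLinearMap.add_apply,
      fderiv_fun_smul d₁ dF, fderiv_fun_smul d₂ dG]
    simp only [ContinuousLinearMap.add_apply, ContinuousLinearMap.smul_apply,
      ContinuousLinearMap.smulRight_apply]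
    simp only [vfD]
    module
  -- the key pointwise identity
  have key : ∀ t ∈ Set.Ioo (-ε) ε,
      det3 (vfD ξb X (γ t)) (vfDIter ηb 2 X (γ t)) (vfDIter ηb 3 X (γ t))
        = a₁ (γ t) * (b₂ (γ t))^5 *
          det3 (vfD ξ X (γ t)) (vfDIter η 2 X (γ t)) (vfDIter η 3 X (γ t)) := by
    intro t ht
    obtain ⟨ha₂0, hb₁0, ha₁0, hb₂0⟩ := hcoef t ht
    have hq : γ t ∈ U := hγmem t ht
    have hGq : vfD η X (γ t) = 0 := hGγ t ht
    have hFgq : vfD ξ (vfD η X) (γ t) = 0 := hFgγ t ht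
    have hv : ηb (γ t) = b₂ (γ t) • η (γ t) := by
      rw [hηb (γ t), hb₁0, zero_smul, zero_add]
    have hIt2 : vfDIter ηb 2 X = vfD ηb (vfD ηb X) := rfl
    have hIt3 : vfDIter ηb 3 X = vfD ηb (vfD ηb (vfD ηb X)) := rfl
    have hIt2' : vfDIter η 2 X = vfD η (vfD η X) := rfl
    have hIt3' : vfDIter η 3 X = vfD η (vfD η (vfD η X)) := rfl
    -- first column
    have hFb : vfD ξb X (γ t) = a₁ (γ t) • vfD ξ X (γ t) := by
      show fderiv ℝ X (γ t) (ξb (γ t)) = _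
      rw [hξb (γ t), map_add, map_smul, map_smul, ha₂0, zero_smul, add_zero]
      rfl
    -- ηb-derivatives of ξX and ηX at the point, in terms of η-derivatives
    have hG'q : vfD ηb (vfD η X) (γ t) = b₂ (γ t) • vfD η (vfD η X) (γ t) := by
      show fderiv ℝ (vfD η X) (γ t) (ηb (γ t)) = _
      rw [hv, map_smul]
      rfl
    -- second column
    have hH2b : vfD ηb (vfD ηb X) (γ t)
        = fderiv ℝ b₁ (γ t) (ηb (γ t)) • vfD ξ X (γ t)
          + (b₂ (γ t))^2 • vfD η (vfD η X) (γ t) := by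
      rw [hH2bU (γ t) hq, hb₁0, hGq, hG'q]
      module
    by_cases hFq : vfD ξ X (γ t) = 0
    · rw [hIt2, hIt3, hIt2', hIt3', hFb, hFq, smul_zero, det3_zero_left, det3_zero_left,
        mul_zero]
    · -- the mixed derivative η(ξX) is proportional to ξX at γ t
      have hkne : η (γ t) ≠ 0 := by rw [hηγ t ht]; exact (hη₀ t ht).1
      have dξ : DifferentiableAt ℝ ξ (γ t) := diffAt_of_cd hU hξsm hq
      have dη : DifferentiableAt ℝ η (γ t) := diffAt_of_cd hU hηsm hq
      have dDX : DifferentiableAt ℝ (fderiv ℝ X) (γ t) :=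
        diffAt_of_cd hU (cd_fderiv hU hXsm) hq
      have hMspan : ∃ μ : ℝ, vfD η (vfD ξ X) (γ t) = μ • vfD ξ X (γ t) := by
        have hev : ∀ᶠ y in nhds (γ t), HasFDerivAt X (fderiv ℝ X y) y := by
          filter_upwards [hU.mem_nhds hq] with y hy
          exact (diffAt_of_cd hU hXsm hy).hasFDerivAt
        have hsymm : ∀ v w : ℝ × ℝ,
            fderiv ℝ (fderiv ℝ X) (γ t) v w = fderiv ℝ (fderiv ℝ X) (γ t) w v :=
          fun v w => second_derivative_symmetric_of_eventually hev dDX.hasFDerivAt v w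
        have hM1 : vfD η (vfD ξ X) (γ t)
            = fderiv ℝ X (γ t) (fderiv ℝ ξ (γ t) (η (γ t)))
              + fderiv ℝ (fderiv ℝ X) (γ t) (η (γ t)) (ξ (γ t)) := by
          show fderiv ℝ (fun p => fderiv ℝ X p (ξ p)) (γ t) (η (γ t)) = _
          rw [fderiv_clm_apply dDX dξ]
          simp [ContinuousLinearMap.add_apply, ContinuousLinearMap.coe_comp',
            Function.comp_apply, ContinuousLinearMap.flip_apply]
        have hM2 : vfD ξ (vfD η X) (γ t)
            = fderiv ℝ X (γ t) (fderiv ℝ η (γ t) (ξ (γ t)))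
              + fderiv ℝ (fderiv ℝ X) (γ t) (ξ (γ t)) (η (γ t)) := by
          show fderiv ℝ (fun p => fderiv ℝ X p (η p)) (γ t) (ξ (γ t)) = _
          rw [fderiv_clm_apply dDX dη]
          simp [ContinuousLinearMap.add_apply, ContinuousLinearMap.coe_comp',
            Function.comp_apply, ContinuousLinearMap.flip_apply]
        have hM3 : vfD η (vfD ξ X) (γ t)
            = fderiv ℝ X (γ t) (fderiv ℝ ξ (γ t) (η (γ t)) - fderiv ℝ η (γ t) (ξ (γ t))) := by
          rw [map_sub, hM1, hsymm (η (γ t)) (ξ (γ t))]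
          rw [hFgq] at hM2
          have h4 : fderiv ℝ (fderiv ℝ X) (γ t) (ξ (γ t)) (η (γ t))
              = - fderiv ℝ X (γ t) (fderiv ℝ η (γ t) (ξ (γ t))) := by
            have := hM2.symm
            linear_combination (norm := module) this
          rw [h4]
          module
        obtain ⟨μ, hμ⟩ := span_lemma hkne hGq hFq
          (fderiv ℝ ξ (γ t) (η (γ t)) - fderiv ℝ η (γ t) (ξ (γ t)))
        exact ⟨μ, by rw [hM3]; exact hμ⟩
      obtain ⟨μ, hμ⟩ := hMspan
      -- ηb-derivative of ξX at γ t
      have hF'q : vfD ηb (vfD ξ X) (γ t) = (b₂ (γ t) * μ) • vfD ξ X (γ t) := by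
        show fderiv ℝ (vfD ξ X) (γ t) (ηb (γ t)) = _
        rw [hv, map_smul]
        have : fderiv ℝ (vfD ξ X) (γ t) (η (γ t)) = μ • vfD ξ X (γ t) := hμ
        rw [this, smul_smul]
      -- third column: differentiate the formula for ηb²X once more
      have hH3b : ∃ C₁ C₂ : ℝ, vfD ηb (vfD ηb (vfD ηb X)) (γ t)
          = C₁ • vfD ξ X (γ t) + C₂ • vfD η (vfD η X) (γ t)
            + (b₂ (γ t))^3 • vfD η (vfD η (vfD η X)) (γ t) := by
        have dβ₁ := diffAt_of_cd hU hβ₁ hq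
        have dβ₂ := diffAt_of_cd hU hβ₂ hq
        have d₁ := diffAt_of_cd hU hb₁ hq
        have d₂ := diffAt_of_cd hU hb₂ hq
        have dF := diffAt_of_cd hU hF hq
        have dG := diffAt_of_cd hU hG hq
        have dF' := diffAt_of_cd hU hF' hq
        have dG' := diffAt_of_cd hU hG' hq
        have dG2 := diffAt_of_cd hU hG2 hq
        have dFg := diffAt_of_cd hU hFg hq
        -- derivative of ηX twice along ηb at the point
        have hG''q : fderiv ℝ (vfD ηb (vfD η X)) (γ t) (ηb (γ t))
            = fderiv ℝ b₂ (γ t) (ηb (γ t)) • vfD η (vfD η X) (γ t)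
              + (b₂ (γ t))^2 • vfD η (vfD η (vfD η X)) (γ t) := by
          rw [hG'fun, fderiv_fun_add (d₁.fun_smul dFg) (d₂.fun_smul dG2), ContinuousLinearMap.add_apply,
            fderiv_fun_smul d₁ dFg, fderiv_fun_smul d₂ dG2]
          simp only [ContinuousLinearMap.add_apply, ContinuousLinearMap.smul_apply,
            ContinuousLinearMap.smulRight_apply]
          rw [hb₁0, hFgq]
          have hG2v : fderiv ℝ (vfD η (vfD η X)) (γ t) (ηb (γ t))
              = b₂ (γ t) • vfD η (vfD η (vfD η X)) (γ t) := by
            rw [hv, map_smul]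
            rfl
          rw [hG2v]
          simp only [vfD]
          module
        -- the values of the single ηb-derivatives at the point
        have h1 : fderiv ℝ (vfD ξ X) (γ t) (ηb (γ t))
            = (b₂ (γ t) * μ) • vfD ξ X (γ t) := hF'q
        have h2 : fderiv ℝ (vfD η X) (γ t) (ηb (γ t))
            = b₂ (γ t) • vfD η (vfD η X) (γ t) := hG'q
        -- replace ηb²X by its product-rule formula near γ t
        have heq : vfD ηb (vfD ηb X) =ᶠ[nhds (γ t)] fun p =>
            fderiv ℝ b₁ p (ηb p) • vfD ξ X p + b₁ p • vfD ηb (vfD ξ X) p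
            + (fderiv ℝ b₂ p (ηb p) • vfD η X p + b₂ p • vfD ηb (vfD η X) p) := by
          filter_upwards [hU.mem_nhds hq] with p hp
          exact hH2bU p hp
        have hfd : fderiv ℝ (vfD ηb (vfD ηb X)) (γ t) = fderiv ℝ (fun p =>
            fderiv ℝ b₁ p (ηb p) • vfD ξ X p + b₁ p • vfD ηb (vfD ξ X) p
            + (fderiv ℝ b₂ p (ηb p) • vfD η X p + b₂ p • vfD ηb (vfD η X) p)) (γ t) :=
          heq.fderiv_eq
        refine ⟨fderiv ℝ (fun p => fderiv ℝ b₁ p (ηb p)) (γ t) (ηb (γ t))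
            + 2 * (fderiv ℝ b₁ (γ t) (ηb (γ t)) * (b₂ (γ t) * μ)),
          3 * (fderiv ℝ b₂ (γ t) (ηb (γ t)) * b₂ (γ t)), ?_⟩
        show fderiv ℝ (vfD ηb (vfD ηb X)) (γ t) (ηb (γ t)) = _
        rw [hfd, fderiv_fun_add ((dβ₁.fun_smul dF).fun_add (d₁.fun_smul dF'))
            ((dβ₂.fun_smul dG).fun_add (d₂.fun_smul dG')), ContinuousLinearMap.add_apply,
          fderiv_fun_add (dβ₁.fun_smul dF) (d₁.fun_smul dF'), fderiv_fun_add (dβ₂.fun_smul dG) (d₂.fun_smul dG'),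
          ContinuousLinearMap.add_apply, ContinuousLinearMap.add_apply,
          fderiv_fun_smul dβ₁ dF, fderiv_fun_smul d₁ dF', fderiv_fun_smul dβ₂ dG, fderiv_fun_smul d₂ dG']
        simp only [ContinuousLinearMap.add_apply, ContinuousLinearMap.smul_apply,
          ContinuousLinearMap.smulRight_apply]
        rw [hb₁0, h1, h2, hG''q, hG'q]
        have hF'v : vfD ηb (vfD ξ X) (γ t) = (b₂ (γ t) * μ) • vfD ξ X (γ t) := hF'q
        rw [hF'v, hGq]
        simp only [vfD]
        module
      obtain ⟨C₁, C₂, h3⟩ := hH3b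
      rw [hIt2, hIt3, hIt2', hIt3', hFb, hH2b, h3, det3_tri]
      ring
  constructor
  · intro h t ht
    rw [key t ht, h t ht, mul_zero]
  · intro h t ht
    have hk := key t ht
    rw [h t ht] at hk
    obtain ⟨-, -, ha₁0, hb₂0⟩ := hcoef t ht
    rcases mul_eq_zero.mp hk.symm with h' | h'
    · rcases mul_eq_zero.mp h' with h'' | h''
      · exact absurd h'' ha₁0
      · exact absurd ((pow_eq_zero_iff (by norm_num : (5:ℕ) ≠ 0)).mp h'') hb₂0
    · exact h'
end
end

section
/- Let X : U → ℝ³ be a frontal, p a non-degenerate singular point of the first kind, γ(t) (|t| < ε) the singular curve through p, ξ, η extensions of γ' and of a null vector field, and Φ a diffeomorphism from an open neighborhood of X(p) in ℝ³ onto an open subset of ℝ³. Then along the singular curve one has ξ(Φ∘X) = dΦ(ξX), η²(Φ∘X) = dΦ(η²X), and η³(Φ∘X) = dΦ(η³X); in particular det(ξ(Φ∘X), η²(Φ∘X), η³(Φ∘X))(γ(t)) = det(dΦ_{X(γ(t))})·det(ξX, η²X, η³X)(γ(t)) for all |t| < ε. Moreover, if η̃ is an extension of a null vector field with η̃³X(p)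 = C·η̃²X(p) for a constant C, then η̃³(Φ∘X)(p) = C·η̃²(Φ∘X)(p) and (3η̃⁵(Φ∘X) − 10C·η̃⁴(Φ∘X))(p) = dΦ_{X(p)}((3η̃⁵X − 10C·η̃⁴X)(p)). -/
noncomputable section

open Set

private lemma smooth_fderiv {E F : Type*} [NormedAddCommGroup E] [NormedSpace ℝ E]
    [NormedAddCommGroup F] [NormedSpace ℝ F] {f : E → F} {s : Set E}
    (hf : ContDiffOn ℝ (⊤:ℕ∞) f s) (hs : IsOpen s) :
    ContDiffOn ℝ (⊤:ℕ∞) (fderiv ℝ f) s :=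
  ((contDiffOn_infty_iff_fderiv_of_isOpen hs).1 hf).2

private lemma cdOn_diffAt {E F : Type*} [NormedAddCommGroup E] [NormedSpace ℝ E]
    [NormedAddCommGroup F] [NormedSpace ℝ F] {f : E → F} {s : Set E} {q : E}
    (hf : ContDiffOn ℝ (⊤:ℕ∞) f s) (hs : IsOpen s) (hq : q ∈ s) :
    DifferentiableAt ℝ f q :=
  (hf.contDiffAt (hs.mem_nhds hq)).differentiableAt (by simp)

private lemma leib_step {E F₁ F₂ : Type*} [NormedAddCommGroup E] [NormedSpace ℝ E]
    [NormedAddCommGroup F₁] [NormedSpace ℝ F₁] [NormedAddCommGroup F₂] [NormedSpace ℝ F₂]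
    (c : E → F₁ →L[ℝ] F₂) (u : E → F₁) {q : E} (hc : DifferentiableAt ℝ c q)
    (hu : DifferentiableAt ℝ u q) (v : E) :
    fderiv ℝ (fun x => c x (u x)) q v = c q (fderiv ℝ u q v) + (fderiv ℝ c q v) (u q) := by
  rw [fderiv_clm_apply hc hu]; rfl

private lemma chain_pt {F' : Type*} [NormedAddCommGroup F'] [NormedSpace ℝ F']
    (g : (Fin 3 → ℝ) → F') (X : ℝ × ℝ → Fin 3 → ℝ) {q : ℝ × ℝ}
    (hg : DifferentiableAt ℝ g (X q)) (hX : DifferentiableAt ℝ X q) (v : ℝ × ℝ) :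
    fderiv ℝ (fun x => g (X x)) q v = fderiv ℝ g (X q) (fderiv ℝ X q v) := by
  rw [show (fun x => g (X x)) = g ∘ X from rfl, fderiv_comp q hg hX]; rfl

private lemma fderiv_add_apply {E α : Type*} [NormedAddCommGroup E] [NormedSpace ℝ E]
    [NormedAddCommGroup α] [NormedSpace ℝ α]
    (f g : E → α) {q : E} (hf : DifferentiableAt ℝ f q) (hg : DifferentiableAt ℝ g q) (v : E) :
    fderiv ℝ (fun x => f x + g x) q v = fderiv ℝ f q v + fderiv ℝ g q v := by
  rw [fderiv_fun_add hf hg]; rfl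

private lemma vfstep {E α : Type*} [NormedAddCommGroup E] [NormedSpace ℝ E]
    [NormedAddCommGroup α] [NormedSpace ℝ α] {V : Set E} (hV : IsOpen V) {f g : E → α}
    (hfg : ∀ x ∈ V, f x = g x) {q : E} (hq : q ∈ V) : fderiv ℝ f q = fderiv ℝ g q :=
  Filter.EventuallyEq.fderiv_eq (by filter_upwards [hV.mem_nhds hq] using hfg)

private def Aseq {F' : Type*} [NormedAddCommGroup F'] [NormedSpace ℝ F']
    (Φ : (Fin 3 → ℝ) → F') (X : ℝ × ℝ → Fin 3 → ℝ) (ζ : ℝ × ℝ → ℝ × ℝ) :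
    ℕ → (ℝ × ℝ) → (Fin 3 → ℝ) →L[ℝ] F'
  | 0 => fun q => fderiv ℝ Φ (X q)
  | (i+1) => fun q => fderiv ℝ (Aseq Φ X ζ i) q (ζ q)

private lemma Aseq_contDiffOn {F' : Type*} [NormedAddCommGroup F'] [NormedSpace ℝ F']
    {Φ : (Fin 3 → ℝ) → F'} {X : ℝ × ℝ → Fin 3 → ℝ} {ζ : ℝ × ℝ → ℝ × ℝ}
    {V : Set (ℝ × ℝ)} {s' : Set (Fin 3 → ℝ)} (hV : IsOpen V) (hs' : IsOpen s')
    (hX : ContDiffOn ℝ (⊤:ℕ∞) X V) (hζ : ContDiffOn ℝ (⊤:ℕ∞) ζ V)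
    (hΦ : ContDiffOn ℝ (⊤:ℕ∞) Φ s') (hXV : Set.MapsTo X V s') :
    ∀ i, ContDiffOn ℝ (⊤:ℕ∞) (Aseq Φ X ζ i) V := by
  intro i
  induction i with
  | zero => exact (smooth_fderiv hΦ hs').comp hX hXV
  | succ i ih => exact (smooth_fderiv ih hV).clm_apply hζ

open Matrix in
private lemma det3_map (f : (Fin 3 → ℝ) →L[ℝ] (Fin 3 → ℝ)) (a b c : Fin 3 → ℝ) :
    det3 (f a) (f b) (f c) = LinearMap.det (f.toLinearMap) * det3 a b c := by
  set M := LinearMap.toMatrix' (f.toLinearMap) with hM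
  have hfa : ∀ v, f v = M *ᵥ v := by
    intro v
    have := Matrix.toLin'_toMatrix' (f.toLinearMap)
    rw [← hM] at this
    rw [show f v = f.toLinearMap v from rfl, ← this, Matrix.toLin'_apply]
  have hrows : Matrix.of ![f a, f b, f c] = Matrix.of ![a, b, c] * Mᵀ := by
    ext i j
    fin_cases i <;>
      simp [hfa, Matrix.mulVec, Matrix.mul_apply, dotProduct, Matrix.transpose_apply,
        mul_comm]
  rw [det3, det3, hrows, Matrix.det_mul, Matrix.det_transpose, hM, LinearMap.det_toMatrix']
  ring

private lemma key
    {V : Set (ℝ × ℝ)} (hV : IsOpen V)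
    {X : ℝ × ℝ → Fin 3 → ℝ} (hX : ContDiffOn ℝ (⊤:ℕ∞) X V)
    {s' : Set (Fin 3 → ℝ)} (hs' : IsOpen s')
    {Φ : (Fin 3 → ℝ) → (Fin 3 → ℝ)} (hΦ : ContDiffOn ℝ (⊤:ℕ∞) Φ s')
    (hXV : Set.MapsTo X V s')
    {ζ : ℝ × ℝ → ℝ × ℝ} (hζ : ContDiffOn ℝ (⊤:ℕ∞) ζ V)
    {q0 : ℝ × ℝ} (hq0 : q0 ∈ V) (h0 : fderiv ℝ X q0 (ζ q0) = 0) :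
    vfDIter ζ 2 (fun x => Φ (X x)) q0 = fderiv ℝ Φ (X q0) (vfDIter ζ 2 X q0) ∧
    vfDIter ζ 3 (fun x => Φ (X x)) q0 = fderiv ℝ Φ (X q0) (vfDIter ζ 3 X q0) ∧
    vfDIter ζ 4 (fun x => Φ (X x)) q0 =
      (3:ℝ) • (fderiv ℝ (fderiv ℝ Φ) (X q0) (vfDIter ζ 2 X q0)) (vfDIter ζ 2 X q0)
        + fderiv ℝ Φ (X q0) (vfDIter ζ 4 X q0) ∧
    vfDIter ζ 5 (fun x => Φ (X x)) q0 =
      (4:ℝ) • (fderiv ℝ (fderiv ℝ Φ) (X q0) (vfDIter ζ 3 X q0)) (vfDIter ζ 2 X q0)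
        + (6:ℝ) • (fderiv ℝ (fderiv ℝ Φ) (X q0) (vfDIter ζ 2 X q0)) (vfDIter ζ 3 X q0)
        + fderiv ℝ Φ (X q0) (vfDIter ζ 5 X q0) := by
  set Y : ℝ × ℝ → Fin 3 → ℝ := fun x => Φ (X x) with hYdef
  set A : ℕ → (ℝ × ℝ) → (Fin 3 → ℝ) →L[ℝ] (Fin 3 → ℝ) := Aseq Φ X ζ with hAdef
  set B : ℕ → (ℝ × ℝ) → (Fin 3 → ℝ) →L[ℝ] ((Fin 3 → ℝ) →L[ℝ] (Fin 3 → ℝ)) :=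
    Aseq (fderiv ℝ Φ) X ζ with hBdef
  set w : ℕ → (ℝ × ℝ) → Fin 3 → ℝ := fun j => vfDIter ζ (j+1) X with hwdef
  have hG : ContDiffOn ℝ (⊤:ℕ∞) (fderiv ℝ Φ) s' := smooth_fderiv hΦ hs'
  have hAsm : ∀ i, ContDiffOn ℝ (⊤:ℕ∞) (A i) V := Aseq_contDiffOn hV hs' hX hζ hΦ hXV
  have hBsm : ∀ i, ContDiffOn ℝ (⊤:ℕ∞) (B i) V := Aseq_contDiffOn hV hs' hX hζ hG hXV
  have hwsucc0 : ∀ j, w (j+1) = vfD ζ (w j) := by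
    intro j
    show vfDIter ζ (j+2) X = vfD ζ (vfDIter ζ (j+1) X)
    exact Function.iterate_succ_apply' (vfD ζ) (j+1) X
  have hwsm : ∀ j, ContDiffOn ℝ (⊤:ℕ∞) (w j) V := by
    intro j
    induction j with
    | zero => exact (smooth_fderiv hX hV).clm_apply hζ
    | succ j ih =>
        rw [hwsucc0 j]
        exact (smooth_fderiv ih hV).clm_apply hζ
  have hwsucc : ∀ j q, w (j+1) q = fderiv ℝ (w j) q (ζ q) := by
    intro j q; rw [hwsucc0 j]; rfl
  have dX : ∀ {q}, q ∈ V → DifferentiableAt ℝ X q := fun hq => cdOn_diffAt hX hV hq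
  have dA : ∀ i {q}, q ∈ V → DifferentiableAt ℝ (A i) q :=
    fun i _ hq => cdOn_diffAt (hAsm i) hV hq
  have dB : ∀ i {q}, q ∈ V → DifferentiableAt ℝ (B i) q :=
    fun i _ hq => cdOn_diffAt (hBsm i) hV hq
  have dw : ∀ j {q}, q ∈ V → DifferentiableAt ℝ (w j) q :=
    fun j _ hq => cdOn_diffAt (hwsm j) hV hq
  have hAsucc : ∀ i q, A (i+1) q = fderiv ℝ (A i) q (ζ q) := fun i q => rfl
  have hBsucc : ∀ i q, B (i+1) q = fderiv ℝ (B i) q (ζ q) := fun i q => rfl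
  have dterm : ∀ (i j : ℕ) {q}, q ∈ V →
      fderiv ℝ (fun x => A i x (w j x)) q (ζ q) = A i q (w (j+1) q) + A (i+1) q (w j q) := by
    intro i j q hq
    rw [leib_step (A i) (w j) (dA i hq) (dw j hq) (ζ q), ← hwsucc j q, ← hAsucc i q]
  have dtermB : ∀ (i j : ℕ) {q}, q ∈ V →
      fderiv ℝ (fun x => B i x (w j x)) q (ζ q) = B i q (w (j+1) q) + B (i+1) q (w j q) := by
    intro i j q hq
    rw [leib_step (B i) (w j) (dB i hq) (dw j hq) (ζ q), ← hwsucc j q, ← hBsucc i q]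
  have hE1 : ∀ q ∈ V, vfDIter ζ 1 Y q = A 0 q (w 0 q) := by
    intro q hq
    exact chain_pt Φ X (cdOn_diffAt hΦ hs' (hXV hq)) (dX hq) (ζ q)
  have hE2 : ∀ q ∈ V, vfDIter ζ 2 Y q = A 0 q (w 1 q) + A 1 q (w 0 q) := by
    intro q hq
    have h : vfDIter ζ 2 Y q = fderiv ℝ (vfDIter ζ 1 Y) q (ζ q) := by
      rw [show vfDIter ζ 2 Y = vfD ζ (vfDIter ζ 1 Y) from Function.iterate_succ_apply' _ _ _]; rfl
    rw [h, vfstep (g := fun x => A 0 x (w 0 x)) hV hE1 hq]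
    exact dterm 0 0 hq
  have hE3 : ∀ q ∈ V, vfDIter ζ 3 Y q
      = (A 0 q (w 2 q) + A 1 q (w 1 q)) + (A 1 q (w 1 q) + A 2 q (w 0 q)) := by
    intro q hq
    have h : vfDIter ζ 3 Y q = fderiv ℝ (vfDIter ζ 2 Y) q (ζ q) := by
      rw [show vfDIter ζ 3 Y = vfD ζ (vfDIter ζ 2 Y) from Function.iterate_succ_apply' _ _ _]; rfl
    rw [h, vfstep (g := fun x => A 0 x (w 1 x) + A 1 x (w 0 x)) hV hE2 hq,
      fderiv_add_apply _ _ ((dA 0 hq).clm_apply (dw 1 hq)) ((dA 1 hq).clm_apply (dw 0 hq))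
        (ζ q), dterm 0 1 hq, dterm 1 0 hq]
  have hE4 : ∀ q ∈ V, vfDIter ζ 4 Y q
      = ((A 0 q (w 3 q) + A 1 q (w 2 q)) + (A 1 q (w 2 q) + A 2 q (w 1 q)))
        + ((A 1 q (w 2 q) + A 2 q (w 1 q)) + (A 2 q (w 1 q) + A 3 q (w 0 q))) := by
    intro q hq
    have h : vfDIter ζ 4 Y q = fderiv ℝ (vfDIter ζ 3 Y) q (ζ q) := by
      rw [show vfDIter ζ 4 Y = vfD ζ (vfDIter ζ 3 Y) from Function.iterate_succ_apply' _ _ _]; rfl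
    rw [h, vfstep
        (g := fun x => (A 0 x (w 2 x) + A 1 x (w 1 x)) + (A 1 x (w 1 x) + A 2 x (w 0 x)))
        hV hE3 hq,
      fderiv_add_apply _ _
        (((dA 0 hq).clm_apply (dw 2 hq)).fun_add ((dA 1 hq).clm_apply (dw 1 hq)))
        (((dA 1 hq).clm_apply (dw 1 hq)).fun_add ((dA 2 hq).clm_apply (dw 0 hq))) (ζ q),
      fderiv_add_apply _ _ ((dA 0 hq).clm_apply (dw 2 hq)) ((dA 1 hq).clm_apply (dw 1 hq))
        (ζ q),
      fderiv_add_apply _ _ ((dA 1 hq).clm_apply (dw 1 hq)) ((dA 2 hq).clm_apply (dw 0 hq))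
        (ζ q),
      dterm 0 2 hq, dterm 1 1 hq, dterm 2 0 hq]
  have hE5 : vfDIter ζ 5 Y q0
      = (((A 0 q0 (w 4 q0) + A 1 q0 (w 3 q0)) + (A 1 q0 (w 3 q0) + A 2 q0 (w 2 q0)))
          + ((A 1 q0 (w 3 q0) + A 2 q0 (w 2 q0)) + (A 2 q0 (w 2 q0) + A 3 q0 (w 1 q0))))
        + (((A 1 q0 (w 3 q0) + A 2 q0 (w 2 q0)) + (A 2 q0 (w 2 q0) + A 3 q0 (w 1 q0)))
          + ((A 2 q0 (w 2 q0) + A 3 q0 (w 1 q0)) + (A 3 q0 (w 1 q0) + A 4 q0 (w 0 q0)))) := by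
    have h : vfDIter ζ 5 Y q0 = fderiv ℝ (vfDIter ζ 4 Y) q0 (ζ q0) := by
      rw [show vfDIter ζ 5 Y = vfD ζ (vfDIter ζ 4 Y) from Function.iterate_succ_apply' _ _ _]; rfl
    rw [h, vfstep
        (g := fun x => ((A 0 x (w 3 x) + A 1 x (w 2 x)) + (A 1 x (w 2 x) + A 2 x (w 1 x)))
          + ((A 1 x (w 2 x) + A 2 x (w 1 x)) + (A 2 x (w 1 x) + A 3 x (w 0 x))))
        hV hE4 hq0,
      fderiv_add_apply _ _
        ((((dA 0 hq0).clm_apply (dw 3 hq0)).fun_add ((dA 1 hq0).clm_apply (dw 2 hq0))).fun_add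
          (((dA 1 hq0).clm_apply (dw 2 hq0)).fun_add ((dA 2 hq0).clm_apply (dw 1 hq0))))
        ((((dA 1 hq0).clm_apply (dw 2 hq0)).fun_add ((dA 2 hq0).clm_apply (dw 1 hq0))).fun_add
          (((dA 2 hq0).clm_apply (dw 1 hq0)).fun_add ((dA 3 hq0).clm_apply (dw 0 hq0)))) (ζ q0),
      fderiv_add_apply _ _
        (((dA 0 hq0).clm_apply (dw 3 hq0)).fun_add ((dA 1 hq0).clm_apply (dw 2 hq0)))
        (((dA 1 hq0).clm_apply (dw 2 hq0)).fun_add ((dA 2 hq0).clm_apply (dw 1 hq0))) (ζ q0),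
      fderiv_add_apply _ _
        (((dA 1 hq0).clm_apply (dw 2 hq0)).fun_add ((dA 2 hq0).clm_apply (dw 1 hq0)))
        (((dA 2 hq0).clm_apply (dw 1 hq0)).fun_add ((dA 3 hq0).clm_apply (dw 0 hq0))) (ζ q0),
      fderiv_add_apply _ _ ((dA 0 hq0).clm_apply (dw 3 hq0)) ((dA 1 hq0).clm_apply (dw 2 hq0))
        (ζ q0),
      fderiv_add_apply _ _ ((dA 1 hq0).clm_apply (dw 2 hq0)) ((dA 2 hq0).clm_apply (dw 1 hq0))
        (ζ q0),
      fderiv_add_apply _ _ ((dA 2 hq0).clm_apply (dw 1 hq0)) ((dA 3 hq0).clm_apply (dw 0 hq0))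
        (ζ q0),
      dterm 0 3 hq0, dterm 1 2 hq0, dterm 2 1 hq0, dterm 3 0 hq0]
  -- pointwise formulas for A in terms of B
  have hw0q0 : w 0 q0 = 0 := h0
  have hA1V : ∀ q ∈ V, A 1 q = B 0 q (w 0 q) := by
    intro q hq
    exact chain_pt (fderiv ℝ Φ) X (cdOn_diffAt hG hs' (hXV hq)) (dX hq) (ζ q)
  have hA1q0 : A 1 q0 = 0 := by rw [hA1V q0 hq0, hw0q0, map_zero]
  have hA2V : ∀ q ∈ V, A 2 q = B 0 q (w 1 q) + B 1 q (w 0 q) := by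
    intro q hq
    have h : A 2 q = fderiv ℝ (A 1) q (ζ q) := rfl
    rw [h, vfstep (g := fun x => B 0 x (w 0 x)) hV hA1V hq]
    exact dtermB 0 0 hq
  have hB1q0 : B 1 q0 = 0 := by
    have h : B 1 q0 = fderiv ℝ (fderiv ℝ (fderiv ℝ Φ)) (X q0) (fderiv ℝ X q0 (ζ q0)) :=
      chain_pt (fderiv ℝ (fderiv ℝ Φ)) X (cdOn_diffAt (smooth_fderiv hG hs') hs' (hXV hq0))
        (dX hq0) (ζ q0)
    rw [h, h0]
    exact ContinuousLinearMap.map_zero _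
  have hA2q0 : A 2 q0 = B 0 q0 (w 1 q0) := by
    rw [hA2V q0 hq0, hw0q0, map_zero, add_zero]
  have hA3q0 : A 3 q0 = B 0 q0 (w 2 q0) := by
    have h : A 3 q0 = fderiv ℝ (A 2) q0 (ζ q0) := rfl
    rw [h, vfstep (g := fun x => B 0 x (w 1 x) + B 1 x (w 0 x)) hV hA2V hq0,
      fderiv_add_apply _ _ ((dB 0 hq0).clm_apply (dw 1 hq0)) ((dB 1 hq0).clm_apply (dw 0 hq0))
        (ζ q0), dtermB 0 1 hq0, dtermB 1 0 hq0, hB1q0, hw0q0, map_zero]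
    simp
  refine ⟨?_, ?_, ?_, ?_⟩
  · show vfDIter ζ 2 Y q0 = A 0 q0 (w 1 q0)
    rw [hE2 q0 hq0, hw0q0, map_zero, add_zero]
  · show vfDIter ζ 3 Y q0 = A 0 q0 (w 2 q0)
    rw [hE3 q0 hq0, hA1q0, hw0q0, map_zero]
    simp only [ContinuousLinearMap.zero_apply, add_zero, zero_add]
  · show vfDIter ζ 4 Y q0 = (3:ℝ) • (B 0 q0 (w 1 q0)) (w 1 q0) + A 0 q0 (w 3 q0)
    rw [hE4 q0 hq0, hA1q0, hA2q0, hw0q0, map_zero]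
    simp only [ContinuousLinearMap.zero_apply, add_zero, zero_add]
    module
  · show vfDIter ζ 5 Y q0 = (4:ℝ) • (B 0 q0 (w 2 q0)) (w 1 q0)
        + (6:ℝ) • (B 0 q0 (w 1 q0)) (w 2 q0) + A 0 q0 (w 4 q0)
    rw [hE5, hA1q0, hA2q0, hA3q0, hw0q0, map_zero]
    simp only [ContinuousLinearMap.zero_apply, add_zero, zero_add]
    module

private lemma chain1 (Φ : (Fin 3 → ℝ) → Fin 3 → ℝ) (X : ℝ × ℝ → Fin 3 → ℝ)
    (ζ : ℝ × ℝ → ℝ × ℝ) {q : ℝ × ℝ} (hΦ : DifferentiableAt ℝ Φ (X q))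
    (hX : DifferentiableAt ℝ X q) :
    vfD ζ (fun x => Φ (X x)) q = fderiv ℝ Φ (X q) (vfD ζ X q) :=
  chain_pt Φ X hΦ hX (ζ q)

/-- The criterion conditions transform naturally under a diffeomorphism Φ of ℝ³. -/
theorem criterion_independent_of_target_coordinates
    (U : Set (ℝ × ℝ)) (hU : IsOpen U)
    (X : ℝ × ℝ → Fin 3 → ℝ) (hfr : IsFrontalOn X U)
    (p : ℝ × ℝ) (hp : p ∈ U) (hnd : IsNondegSing X U p)
    -- the singular curve γ(t), |t| < ε, through p = γ(0)
    (ε : ℝ) (hε : 0 < ε) (γ : ℝ → ℝ × ℝ)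
    (hγmem : ∀ t ∈ Set.Ioo (-ε) ε, γ t ∈ U)
    (hγsm : ContDiffOn ℝ (⊤:ℕ∞) γ (Set.Ioo (-ε) ε))
    (hγ0 : γ 0 = p)
    (hγreg : ∀ t ∈ Set.Ioo (-ε) ε, deriv γ t ≠ 0)
    (hγsing : ∃ W, IsOpen W ∧ p ∈ W ∧ W ⊆ U ∧
      ∀ q ∈ W, (IsSingularPt X q ↔ q ∈ γ '' Set.Ioo (-ε) ε))
    -- a null vector field η₀ along γ
    (η₀ : ℝ → ℝ × ℝ) (hη₀sm : ContDiffOn ℝ (⊤:ℕ∞) η₀ (Set.Ioo (-ε) ε))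
    (hη₀ : ∀ t ∈ Set.Ioo (-ε) ε, η₀ t ≠ 0 ∧ fderiv ℝ X (γ t) (η₀ t) = 0)
    -- p is of the first kind
    (hfirst : LinearIndependent ℝ ![deriv γ 0, η₀ 0])
    -- ξ, η : smooth extensions of γ' and of the null vector field η₀
    (ξ η : ℝ × ℝ → ℝ × ℝ)
    (hξsm : ContDiffOn ℝ (⊤:ℕ∞) ξ U) (hηsm : ContDiffOn ℝ (⊤:ℕ∞) η U)
    (hξγ : ∀ t ∈ Set.Ioo (-ε) ε, ξ (γ t) = deriv γ t)
    (hηγ : ∀ t ∈ Set.Ioo (-ε) ε, η (γ t) = η₀ t)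
    -- Φ : a diffeomorphism of a neighborhood of X(p) in ℝ³ onto an open set
    (s' t' : Set (Fin 3 → ℝ)) (Φ : (Fin 3 → ℝ) → (Fin 3 → ℝ))
    (hΦ : IsDiffeoOn Φ s' t') (hXp : X p ∈ s')
    (hXγ : ∀ t ∈ Set.Ioo (-ε) ε, X (γ t) ∈ s')
    -- η̃ : a smooth extension of a null vector field along γ, with η̃³X(p) = C·η̃²X(p)
    (ηt : ℝ × ℝ → ℝ × ℝ) (hηtsm : ContDiffOn ℝ (⊤:ℕ∞) ηt U)
    (hηtnull : ∀ t ∈ Set.Ioo (-ε) ε, ηt (γ t) ≠ 0 ∧ fderiv ℝ X (γ t) (ηt (γ t)) = 0)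
    (C : ℝ) (hC : vfDIter ηt 3 X p = C • vfDIter ηt 2 X p) :
    (∀ t ∈ Set.Ioo (-ε) ε,
      vfD ξ (fun q => Φ (X q)) (γ t) = fderiv ℝ Φ (X (γ t)) (vfD ξ X (γ t)) ∧
      vfDIter η 2 (fun q => Φ (X q)) (γ t)
        = fderiv ℝ Φ (X (γ t)) (vfDIter η 2 X (γ t)) ∧
      vfDIter η 3 (fun q => Φ (X q)) (γ t)
        = fderiv ℝ Φ (X (γ t)) (vfDIter η 3 X (γ t)) ∧
      det3 (vfD ξ (fun q => Φ (X q)) (γ t)) (vfDIter η 2 (fun q => Φ (X q)) (γ t))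
          (vfDIter η 3 (fun q => Φ (X q)) (γ t))
        = LinearMap.det (fderiv ℝ Φ (X (γ t))).toLinearMap *
            det3 (vfD ξ X (γ t)) (vfDIter η 2 X (γ t)) (vfDIter η 3 X (γ t))) ∧
    vfDIter ηt 3 (fun q => Φ (X q)) p = C • vfDIter ηt 2 (fun q => Φ (X q)) p ∧
    (3:ℝ) • vfDIter ηt 5 (fun q => Φ (X q)) p
        - (10 * C) • vfDIter ηt 4 (fun q => Φ (X q)) p
      = fderiv ℝ Φ (X p)
          ((3:ℝ) • vfDIter ηt 5 X p - (10 * C) • vfDIter ηt 4 X p) := by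
  obtain ⟨hs'o, ht'o, hΦsm, hrest⟩ := hΦ
  set V := U ∩ X ⁻¹' s' with hVdef
  have hVo : IsOpen V := (hfr.1.continuousOn).isOpen_inter_preimage hU hs'o
  have hXsm : ContDiffOn ℝ (⊤:ℕ∞) X V := hfr.1.mono inter_subset_left
  have hXV : Set.MapsTo X V s' := fun q hq => hq.2
  constructor
  · intro t ht
    have hγU : γ t ∈ U := hγmem t ht
    have hγV : γ t ∈ V := ⟨hγU, hXγ t ht⟩
    have h1 : vfD ξ (fun q => Φ (X q)) (γ t) = fderiv ℝ Φ (X (γ t)) (vfD ξ X (γ t)) :=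
      chain1 Φ X ξ (cdOn_diffAt hΦsm hs'o (hXγ t ht)) (cdOn_diffAt hfr.1 hU hγU)
    have h0 : fderiv ℝ X (γ t) (η (γ t)) = 0 := by
      rw [hηγ t ht]; exact (hη₀ t ht).2
    obtain ⟨h2, h3, -, -⟩ :=
      key hVo hXsm hs'o hΦsm hXV (hηsm.mono inter_subset_left) hγV h0
    refine ⟨h1, h2, h3, ?_⟩
    rw [h1, h2, h3]
    exact det3_map _ _ _ _
  · have hpV : p ∈ V := ⟨hp, hXp⟩
    have h0 : fderiv ℝ X p (ηt p) = 0 := by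
      have h := (hηtnull 0 ⟨by linarith, hε⟩).2
      rwa [hγ0] at h
    obtain ⟨k2, k3, k4, k5⟩ :=
      key hVo hXsm hs'o hΦsm hXV (hηtsm.mono inter_subset_left) hpV h0
    constructor
    · rw [k3, hC, ContinuousLinearMap.map_smul, k2]
    · rw [k4, k5, hC, (fderiv ℝ (fderiv ℝ Φ) (X p)).map_smul,
        ContinuousLinearMap.smul_apply, (fderiv ℝ (fderiv ℝ Φ) (X p) (vfDIter ηt 2 X p)).map_smul,
        (fderiv ℝ Φ (X p)).map_sub, (fderiv ℝ Φ (X p)).map_smul, (fderiv ℝ Φ (X p)).map_smul]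
      module
end
end

section
/- Let H ≠ 0 and k < −1 be real numbers. Define δ(r) = (r² + k + 1)² − 4k (positive for all r), Δ(r) = 2(k+1)r² + (1−k)², h = (1−k)/(2H|1+k|), and on the strip D = {(r,t) : |r| < (1−k)/√(2|1+k|)} (where Δ(r) > 0) set ρ(r) = √Δ(r)/(2H|k+1|), λ(r) = ∫₀^r √(2|1+k|)·τ⁴/(H√δ(τ)·Δ(τ)) dτ, φ(r,t) = −∫₀^r √(2|1+k|)·(1−k)·τ²/(√δ(τ)·Δ(τ)) dτ − √(|1+k|/2)·t, and X(r,t) = (ρ(r)·sinh φ(r,t), ρ(r)·cosh φ(r,t), λ(r) + h·φ(r,t)). Then the singular points of X in D are exactly the points with r = 0, and every singular point of X is a (2,5)-cuspidal edge. -/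
noncomputable section

open Set

/-- `δ(r) = (r² + k + 1)² − 4k`. -/
def δT (k r : ℝ) : ℝ := (r ^ 2 + k + 1) ^ 2 - 4 * k

/-- `Δ(r) = 2(k+1)r² + (1−k)²`. -/
def ΔT (k r : ℝ) : ℝ := 2 * (k + 1) * r ^ 2 + (1 - k) ^ 2

/-- `h = (1−k)/(2H|1+k|)`. -/
def h12 (H k : ℝ) : ℝ := (1 - k) / (2 * H * |1 + k|)

/-- `ρ(r) = √Δ(r)/(2H|k+1|)`. -/
def ρ12 (H k r : ℝ) : ℝ := Real.sqrt (ΔT k r) / (2 * H * |k + 1|)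

/-- `λ(r) = ∫₀^r √(2|1+k|)·τ⁴/(H√δ(τ)·Δ(τ)) dτ`. -/
def lam12 (H k r : ℝ) : ℝ :=
  ∫ τ in (0:ℝ)..r, Real.sqrt (2 * |1 + k|) * τ ^ 4 / (H * Real.sqrt (δT k τ) * ΔT k τ)

/-- `φ(r,t) = −∫₀^r √(2|1+k|)·(1−k)·τ²/(√δ(τ)·Δ(τ)) dτ − √(|1+k|/2)·t`. -/
def φ12 (H k r t : ℝ) : ℝ :=
  -(∫ τ in (0:ℝ)..r,
      Real.sqrt (2 * |1 + k|) * (1 - k) * τ ^ 2 / (Real.sqrt (δT k τ) * ΔT k τ))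
    - Real.sqrt (|1 + k| / 2) * t

/-- The strip `{(r,t) : |r| < (1−k)/√(2|1+k|)}`. -/
def D12 (k : ℝ) : Set (ℝ × ℝ) := {p : ℝ × ℝ | |p.1| < (1 - k) / Real.sqrt (2 * |1 + k|)}

/-- The conjugate of the spacelike Delaunay surface with timelike axis (`k < −1`):
`X(r,t) = (ρ(r)·sinh φ(r,t), ρ(r)·cosh φ(r,t), λ(r) + h·φ(r,t))`. -/
def X12 (H k : ℝ) (p : ℝ × ℝ) : Fin 3 → ℝ :=
  ![ρ12 H k p.1 * Real.sinh (φ12 H k p.1 p.2),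
    ρ12 H k p.1 * Real.cosh (φ12 H k p.1 p.2),
    lam12 H k p.1 + h12 H k * φ12 H k p.1 p.2]

section CuspAux

variable {H k : ℝ}

def rbT (k : ℝ) : ℝ := (1 - k) / Real.sqrt (2 * |1 + k|)

def gIntg (k τ : ℝ) : ℝ :=
  Real.sqrt (2 * |1 + k|) * (1 - k) * τ ^ 2 / (Real.sqrt (δT k τ) * ΔT k τ)

def lIntg (H k τ : ℝ) : ℝ :=
  Real.sqrt (2 * |1 + k|) * τ ^ 4 / (H * Real.sqrt (δT k τ) * ΔT k τ)

def Gint (k r : ℝ) : ℝ := ∫ τ in (0:ℝ)..r, gIntg k τ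

lemma φ12_eq (H k r t : ℝ) : φ12 H k r t = -(Gint k r) - Real.sqrt (|1 + k| / 2) * t := rfl

lemma lam12_eq (H k r : ℝ) : lam12 H k r = ∫ τ in (0:ℝ)..r, lIntg H k τ := rfl

lemma habsk (hk : k < -1) : |1 + k| = -(1 + k) := abs_of_neg (by linarith)

lemma hA_pos (hk : k < -1) : 0 < |1 + k| := abs_pos.2 (ne_of_lt (by linarith))

lemma hδ_pos (hk : k < -1) (r : ℝ) : 0 < δT k r := by
  unfold δT; nlinarith [sq_nonneg (r ^ 2 + k + 1)]

lemma sqrt2A_pos (hk : k < -1) : 0 < Real.sqrt (2 * |1 + k|) :=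
  Real.sqrt_pos.2 (by have := hA_pos hk; linarith)

lemma rbT_pos (hk : k < -1) : 0 < rbT k := div_pos (by linarith) (sqrt2A_pos hk)

lemma sq_sqrt2A (hk : k < -1) : (Real.sqrt (2 * |1 + k|)) ^ 2 = 2 * |1 + k| :=
  Real.sq_sqrt (by have := hA_pos hk; linarith)

lemma ΔT_pos (hk : k < -1) {r : ℝ} (hr : |r| < rbT k) : 0 < ΔT k r := by
  have hS := sqrt2A_pos hk
  have h1 : |r| * Real.sqrt (2 * |1 + k|) < 1 - k := by
    rw [rbT, lt_div_iff₀ hS] at hr; exact hr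
  have h2 : (|r| * Real.sqrt (2 * |1 + k|)) ^ 2 < (1 - k) ^ 2 := by
    nlinarith [mul_nonneg (abs_nonneg r) hS.le]
  have h3 : r ^ 2 * (2 * |1 + k|) < (1 - k) ^ 2 := by
    rw [mul_pow, sq_abs, sq_sqrt2A hk] at h2; exact h2
  rw [habsk hk] at h3
  unfold ΔT; nlinarith

lemma contDiff_δT : ContDiff ℝ (⊤:ℕ∞) (δT k) := by unfold δT; fun_prop

lemma contDiff_ΔT : ContDiff ℝ (⊤:ℕ∞) (ΔT k) := by unfold ΔT; fun_prop

lemma contDiffOn_sqrt_comp {f : ℝ → ℝ} {s : Set ℝ} (hf : ContDiff ℝ (⊤:ℕ∞) f)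
    (h0 : ∀ x ∈ s, f x ≠ 0) : ContDiffOn ℝ (⊤:ℕ∞) (fun x => Real.sqrt (f x)) s :=
  fun x hx => ((Real.contDiffAt_sqrt (h0 x hx)).comp x hf.contDiffAt).contDiffWithinAt

lemma sqrtδ_pos (hk : k < -1) (x : ℝ) : 0 < Real.sqrt (δT k x) :=
  Real.sqrt_pos.2 (hδ_pos hk x)

lemma denom_ne (hk : k < -1) {x : ℝ} (hx : x ∈ Ioo (-rbT k) (rbT k)) :
    Real.sqrt (δT k x) * ΔT k x ≠ 0 :=
  mul_ne_zero (sqrtδ_pos hk x).ne' (ΔT_pos hk (abs_lt.2 ⟨hx.1, hx.2⟩)).ne'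

lemma contDiffOn_gIntg (hk : k < -1) :
    ContDiffOn ℝ (⊤:ℕ∞) (gIntg k) (Ioo (-rbT k) (rbT k)) := by
  apply ContDiffOn.div
  · exact ContDiff.contDiffOn (by fun_prop)
  · exact (contDiffOn_sqrt_comp contDiff_δT fun x _ => (hδ_pos hk x).ne').mul
      contDiff_ΔT.contDiffOn
  · exact fun x hx => denom_ne hk hx

lemma contDiffOn_lIntg (hk : k < -1) (hH : H ≠ 0) :
    ContDiffOn ℝ (⊤:ℕ∞) (lIntg H k) (Ioo (-rbT k) (rbT k)) := by
  apply ContDiffOn.div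
  · exact ContDiff.contDiffOn (by fun_prop)
  · exact ContDiffOn.mul (ContDiffOn.mul contDiffOn_const
      (contDiffOn_sqrt_comp contDiff_δT fun x _ => (hδ_pos hk x).ne'))
      contDiff_ΔT.contDiffOn
  · intro x hx
    exact mul_ne_zero (mul_ne_zero hH (sqrtδ_pos hk x).ne')
      (ΔT_pos hk (abs_lt.2 ⟨hx.1, hx.2⟩)).ne'

lemma uIcc_sub_Ioo (hk : k < -1) {r : ℝ} (hr : |r| < rbT k) :
    uIcc (0:ℝ) r ⊆ Ioo (-rbT k) (rbT k) := by
  intro x hx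
  rcases abs_lt.1 hr with ⟨h1, h2⟩
  rcases Set.mem_uIcc.1 hx with ⟨ha, hb⟩ | ⟨ha, hb⟩ <;>
    exact ⟨by linarith, by linarith⟩

lemma hasDerivAt_FTC {f : ℝ → ℝ} (hf : ContinuousOn f (Ioo (-rbT k) (rbT k)))
    {r : ℝ} (hk : k < -1) (hr : |r| < rbT k) :
    HasDerivAt (fun u => ∫ τ in (0:ℝ)..u, f τ) (f r) r := by
  have hmem : r ∈ Ioo (-rbT k) (rbT k) := abs_lt.1 hr
  exact intervalIntegral.integral_hasDerivAt_right
    ((hf.mono (uIcc_sub_Ioo hk hr)).intervalIntegrable)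
    (hf.stronglyMeasurableAtFilter isOpen_Ioo r hmem)
    (hf.continuousAt (isOpen_Ioo.mem_nhds hmem))

lemma hasDerivAt_Gint (hk : k < -1) {r : ℝ} (hr : |r| < rbT k) :
    HasDerivAt (Gint k) (gIntg k r) r :=
  hasDerivAt_FTC (contDiffOn_gIntg hk).continuousOn hk hr

lemma hasDerivAt_lam12 (hk : k < -1) (hH : H ≠ 0) {r : ℝ} (hr : |r| < rbT k) :
    HasDerivAt (lam12 H k) (lIntg H k r) r :=
  hasDerivAt_FTC (contDiffOn_lIntg hk hH).continuousOn hk hr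

lemma contDiffOn_Gint (hk : k < -1) :
    ContDiffOn ℝ (⊤:ℕ∞) (Gint k) (Ioo (-rbT k) (rbT k)) := by
  rw [show ((⊤:ℕ∞) : WithTop ℕ∞) = (⊤:ℕ∞) from rfl]
  rw [contDiffOn_infty_iff_deriv_of_isOpen isOpen_Ioo]
  constructor
  · exact fun x hx =>
      (hasDerivAt_Gint hk (abs_lt.2 ⟨hx.1, hx.2⟩)).differentiableAt.differentiableWithinAt
  · exact (contDiffOn_gIntg hk).congr fun x hx =>
      (hasDerivAt_Gint hk (abs_lt.2 ⟨hx.1, hx.2⟩)).deriv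

lemma hasDerivAt_ρ12 (hk : k < -1) (hH : H ≠ 0) {r : ℝ} (hr : |r| < rbT k) :
    HasDerivAt (ρ12 H k) (4 * (k + 1) * r / (2 * Real.sqrt (ΔT k r)) / (2 * H * |k + 1|)) r := by
  have h1 : HasDerivAt (ΔT k) (4 * (k + 1) * r) r := by
    have : HasDerivAt (fun r : ℝ => 2 * (k + 1) * r ^ 2 + (1 - k) ^ 2)
        (2 * (k + 1) * (2 * r) + 0) r := by
      exact (((hasDerivAt_pow 2 r).const_mul (2 * (k + 1))).add_const _).congr_deriv (by ring)
    unfold ΔT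
    exact this.congr_deriv (by ring)
  exact (h1.sqrt (ΔT_pos hk hr).ne').div_const _


lemma param_aux_lt {c x σ : ℝ} (hc : 0 < c) (hx : x < c) (hσ0 : 0 ≤ σ) (hσ1 : σ ≤ 1) :
    x * σ ^ 2 < c := by
  rcases le_or_gt x 0 with h | h
  · have : x * σ ^ 2 ≤ 0 := mul_nonpos_of_nonpos_of_nonneg h (sq_nonneg σ)
    linarith
  · have hsq : σ ^ 2 ≤ 1 := by nlinarith
    nlinarith

lemma param_hasDerivAt {c : ℝ} (hc : 0 < c) (m : ℕ) (V : ℝ → ℝ)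
    (hV : ContDiffOn ℝ (⊤:ℕ∞) V (Iio c)) {s₀ : ℝ} (hs₀ : s₀ < c) :
    HasDerivAt (fun s => ∫ σ in (0:ℝ)..1, σ ^ m * V (s * σ ^ 2))
      (∫ σ in (0:ℝ)..1, σ ^ (m + 2) * deriv V (s₀ * σ ^ 2)) s₀ := by
  have hVc : ContinuousOn V (Iio c) := hV.continuousOn
  have hdV : ContDiffOn ℝ (⊤:ℕ∞) (deriv V) (Iio c) :=
    hV.deriv_of_isOpen isOpen_Iio (by exact_mod_cast (le_top : (⊤:ℕ∞) + 1 ≤ ⊤))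
  have hdVc : ContinuousOn (deriv V) (Iio c) := hdV.continuousOn
  set ε : ℝ := (c - s₀) / 2 with hε_def
  have hε : 0 < ε := by rw [hε_def]; linarith
  set K : Set ℝ := Icc (-(|s₀| + ε)) (max ((s₀ + c) / 2) 0) with hK_def
  have hKsub : K ⊆ Iio c := by
    intro y hy
    have h2 : max ((s₀ + c) / 2) 0 < c := max_lt (by linarith) hc
    exact lt_of_le_of_lt hy.2 h2
  obtain ⟨C, hC⟩ := isCompact_Icc.exists_bound_of_continuousOn (hdVc.mono hKsub)
  have h0K : (0:ℝ) ∈ K :=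
    ⟨neg_nonpos.2 (by positivity), le_max_right _ 0⟩
  have hC0 : 0 ≤ C := le_trans (norm_nonneg _) (hC 0 h0K)
  have hball : ∀ x ∈ Metric.ball s₀ ε, x < c ∧ |x| ≤ |s₀| + ε := by
    intro x hx
    rw [Metric.mem_ball, Real.dist_eq] at hx
    rcases abs_lt.1 hx with ⟨h1, h2⟩
    constructor
    · linarith [abs_nonneg s₀, neg_abs_le s₀, le_abs_self s₀]
    · have := abs_sub_abs_le_abs_sub x s₀
      linarith
  have hmemK : ∀ x ∈ Metric.ball s₀ ε, ∀ σ : ℝ, 0 ≤ σ → σ ≤ 1 →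
      x * σ ^ 2 ∈ K ∧ x * σ ^ 2 ∈ Iio c := by
    intro x hx σ hσ0 hσ1
    obtain ⟨hxc, hxa⟩ := hball x hx
    have hx2 : x < (s₀ + c) / 2 := by
      rw [Metric.mem_ball, Real.dist_eq] at hx
      rcases abs_lt.1 hx with ⟨_, h2⟩
      linarith
    have hsq : σ ^ 2 ≤ 1 := by nlinarith
    refine ⟨⟨?_, ?_⟩, param_aux_lt hc hxc hσ0 hσ1⟩
    · have h1 : -|x| ≤ x := neg_abs_le x
      nlinarith [abs_nonneg x, sq_nonneg σ]
    · rcases le_or_gt x 0 with h | h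
      · have : x * σ ^ 2 ≤ 0 := mul_nonpos_of_nonpos_of_nonneg h (sq_nonneg σ)
        exact le_trans this (le_max_right _ 0)
      · have : x * σ ^ 2 ≤ (s₀ + c) / 2 := by nlinarith
        exact le_trans this (le_max_left _ 0)
  have hinmap : ∀ x ∈ Metric.ball s₀ ε, ContinuousOn (fun σ : ℝ => σ ^ m * V (x * σ ^ 2))
      (Icc (0:ℝ) 1) := by
    intro x hx
    apply (continuousOn_pow m).mul
    apply hVc.comp ((continuous_const.mul (continuous_pow 2)).continuousOn)
    intro σ hσ
    exact (hmemK x hx σ hσ.1 hσ.2).2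
  have hinmap' : ∀ x ∈ Metric.ball s₀ ε,
      ContinuousOn (fun σ : ℝ => σ ^ (m + 2) * deriv V (x * σ ^ 2)) (Icc (0:ℝ) 1) := by
    intro x hx
    apply (continuousOn_pow (m + 2)).mul
    apply hdVc.comp ((continuous_const.mul (continuous_pow 2)).continuousOn)
    intro σ hσ
    exact (hmemK x hx σ hσ.1 hσ.2).2
  have hs₀ball : s₀ ∈ Metric.ball s₀ ε := Metric.mem_ball_self hε
  have hιsub : Set.uIoc (0:ℝ) 1 ⊆ Icc (0:ℝ) 1 := by
    rw [Set.uIoc_of_le zero_le_one]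
    exact Ioc_subset_Icc_self
  have key := intervalIntegral.hasDerivAt_integral_of_dominated_loc_of_deriv_le
    (F := fun x σ => σ ^ m * V (x * σ ^ 2))
    (F' := fun x σ => σ ^ (m + 2) * deriv V (x * σ ^ 2))
    (bound := fun _ => C) (μ := MeasureTheory.volume) (a := (0:ℝ)) (b := 1) (x₀ := s₀) (Metric.ball_mem_nhds s₀ hε)
    ?_ ?_ ?_ ?_ ?_ ?_
  · exact key.2
  · filter_upwards [Metric.ball_mem_nhds s₀ hε] with x hx
    exact (((hinmap x hx).mono hιsub)).aestronglyMeasurable measurableSet_uIoc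
  · exact ((hinmap s₀ hs₀ball).mono (by rw [Set.uIcc_of_le zero_le_one]) ).intervalIntegrable
  · exact (((hinmap' s₀ hs₀ball).mono hιsub)).aestronglyMeasurable measurableSet_uIoc
  · apply Filter.Eventually.of_forall
    intro σ hσ x hx
    rw [Set.uIoc_of_le zero_le_one] at hσ
    have hmem := (hmemK x hx σ hσ.1.le hσ.2).1
    have habs : |σ| ≤ 1 := abs_le.2 ⟨by linarith [hσ.1], hσ.2⟩
    have h1 : ‖σ ^ (m + 2) * deriv V (x * σ ^ 2)‖ =
        |σ| ^ (m + 2) * ‖deriv V (x * σ ^ 2)‖ := by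
      rw [norm_mul, Real.norm_eq_abs, abs_pow]
    rw [h1]
    have h2 : ‖deriv V (x * σ ^ 2)‖ ≤ C := hC _ hmem
    have h3 : |σ| ^ (m + 2) ≤ 1 := pow_le_one₀ (abs_nonneg σ) habs
    nlinarith [norm_nonneg (deriv V (x * σ ^ 2)), pow_nonneg (abs_nonneg σ) (m + 2)]
  · exact intervalIntegrable_const
  · apply Filter.Eventually.of_forall
    intro σ hσ x hx
    rw [Set.uIoc_of_le zero_le_one] at hσ
    have hmem := (hmemK x hx σ hσ.1.le hσ.2).2
    have hVd : HasDerivAt V (deriv V (x * σ ^ 2)) (x * σ ^ 2) :=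
      (((hV.contDiffAt (isOpen_Iio.mem_nhds hmem)).differentiableAt
        (by simp)).hasDerivAt)
    have hin : HasDerivAt (fun y : ℝ => y * σ ^ 2) (σ ^ 2) x := hasDerivAt_mul_const _
    have hcomp := (hVd.comp x hin).const_mul (σ ^ m)
    exact hcomp.congr_deriv (by ring)

lemma param_contDiffOn {c : ℝ} (hc : 0 < c) :
    ∀ (n : ℕ) (m : ℕ) (V : ℝ → ℝ), ContDiffOn ℝ (⊤:ℕ∞) V (Iio c) →
    ContDiffOn ℝ (n : ℕ) (fun s => ∫ σ in (0:ℝ)..1, σ ^ m * V (s * σ ^ 2)) (Iio c) := by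
  intro n
  induction n with
  | zero =>
    intro m V hV
    exact contDiffOn_zero.2 fun s hs =>
      ((param_hasDerivAt hc m V hV hs).continuousAt).continuousWithinAt
  | succ n ih =>
    intro m V hV
    have hcast : (((n + 1 : ℕ)) : WithTop ℕ∞) = (n : WithTop ℕ∞) + 1 := by push_cast; ring
    rw [hcast, contDiffOn_succ_iff_deriv_of_isOpen isOpen_Iio]
    refine ⟨fun s hs =>
      (param_hasDerivAt hc m V hV hs).differentiableAt.differentiableWithinAt, by simp, ?_⟩
    have hdV : ContDiffOn ℝ (⊤:ℕ∞) (deriv V) (Iio c) :=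
      hV.deriv_of_isOpen isOpen_Iio (by exact_mod_cast (le_top : (⊤:ℕ∞) + 1 ≤ ⊤))
    exact (ih (m + 2) (deriv V) hdV).congr fun s hs => (param_hasDerivAt hc m V hV hs).deriv

lemma param_contDiffOn_top {c : ℝ} (hc : 0 < c) (m : ℕ) (V : ℝ → ℝ)
    (hV : ContDiffOn ℝ (⊤:ℕ∞) V (Iio c)) :
    ContDiffOn ℝ (⊤:ℕ∞) (fun s => ∫ σ in (0:ℝ)..1, σ ^ m * V (s * σ ^ 2)) (Iio c) := by
  exact contDiffOn_infty.2 fun n => param_contDiffOn hc n m V hV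


def δsf (k s : ℝ) : ℝ := (s + k + 1) ^ 2 - 4 * k
def Δsf (k s : ℝ) : ℝ := 2 * (k + 1) * s + (1 - k) ^ 2
def sMf (k : ℝ) : ℝ := (1 - k) ^ 2 / (2 * |1 + k|)
def Wf (H k s : ℝ) : ℝ := Real.sqrt (2 * |1 + k|) / (H * Real.sqrt (δsf k s) * Δsf k s)
def Lf (H k s : ℝ) : ℝ := ∫ σ in (0:ℝ)..1, σ ^ 4 * Wf H k (s * σ ^ 2)

lemma hsM_pos (hk : k < -1) : 0 < sMf k := by
  have := hA_pos (k := k) hk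
  unfold sMf
  apply div_pos (by nlinarith) (by linarith)

lemma hδsf_pos (hk : k < -1) (s : ℝ) : 0 < δsf k s := by
  unfold δsf; nlinarith [sq_nonneg (s + k + 1)]

lemma hΔsf_pos (hk : k < -1) {s : ℝ} (hs : s < sMf k) : 0 < Δsf k s := by
  have hA := hA_pos (k := k) hk
  rw [sMf, lt_div_iff₀ (by linarith)] at hs
  rw [habsk hk] at hs
  unfold Δsf; nlinarith

lemma hΔT_δT_eq (r : ℝ) : ΔT k r = Δsf k (r ^ 2) ∧ δT k r = δsf k (r ^ 2) := by
  constructor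
  · unfold ΔT Δsf; ring
  · unfold δT δsf; ring

lemma contDiffOn_Wf (hk : k < -1) (hH : H ≠ 0) :
    ContDiffOn ℝ (⊤:ℕ∞) (Wf H k) (Iio (sMf k)) := by
  apply ContDiffOn.div contDiffOn_const
  · apply ContDiffOn.mul
    · exact ContDiffOn.mul contDiffOn_const
        (contDiffOn_sqrt_comp (by unfold δsf; fun_prop) fun x _ => (hδsf_pos hk x).ne')
    · exact ContDiff.contDiffOn (by unfold Δsf; fun_prop)
  · intro s hs
    exact mul_ne_zero (mul_ne_zero hH (Real.sqrt_pos.2 (hδsf_pos hk s)).ne')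
      (hΔsf_pos hk hs).ne'

lemma contDiffOn_Lf (hk : k < -1) (hH : H ≠ 0) :
    ContDiffOn ℝ (⊤:ℕ∞) (Lf H k) (Iio (sMf k)) :=
  param_contDiffOn_top (hsM_pos hk) 4 (Wf H k) (contDiffOn_Wf hk hH)

lemma lam_eq_L (H k : ℝ) (r : ℝ) : lam12 H k r = r ^ 5 * Lf H k (r ^ 2) := by
  have h1 := intervalIntegral.smul_integral_comp_mul_left (fun τ => lIntg H k τ)
    (a := (0:ℝ)) (b := 1) r
  simp only [mul_zero, mul_one] at h1
  have h2 : ∀ σ : ℝ, lIntg H k (r * σ) = r ^ 4 * (σ ^ 4 * Wf H k (r ^ 2 * σ ^ 2)) := by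
    intro σ
    have e1 : δT k (r * σ) = δsf k (r ^ 2 * σ ^ 2) := by unfold δT δsf; ring
    have e2 : ΔT k (r * σ) = Δsf k (r ^ 2 * σ ^ 2) := by unfold ΔT Δsf; ring
    rw [lIntg, Wf, e1, e2]; ring
  rw [lam12_eq, ← h1]
  rw [intervalIntegral.integral_congr (g := fun σ => r ^ 4 * (σ ^ 4 * Wf H k (r ^ 2 * σ ^ 2)))
    (fun σ _ => h2 σ)]
  rw [intervalIntegral.integral_const_mul]
  rw [show (fun σ : ℝ => σ ^ 4 * Wf H k (r ^ 2 * σ ^ 2)) =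
    (fun σ : ℝ => σ ^ 4 * Wf H k (r ^ 2 * σ ^ 2)) from rfl]
  rw [Lf, smul_eq_mul]; ring

lemma L0_ne (hk : k < -1) (hH : H ≠ 0) : Lf H k 0 ≠ 0 := by
  have hW : Wf H k 0 ≠ 0 := by
    apply div_ne_zero (sqrt2A_pos hk).ne'
    exact mul_ne_zero (mul_ne_zero hH (Real.sqrt_pos.2 (hδsf_pos hk 0)).ne')
      (by unfold Δsf; nlinarith)
  have h1 : Lf H k 0 = Wf H k 0 / 5 := by
    rw [Lf]
    rw [intervalIntegral.integral_congr (g := fun σ : ℝ => σ ^ 4 * Wf H k 0)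
      (fun σ _ => by norm_num)]
    rw [intervalIntegral.integral_mul_const, integral_pow]
    norm_num
    ring
  rw [h1]
  exact div_ne_zero hW (by norm_num)

lemma exists_eps (hk : k < -1) (hH : H ≠ 0) :
    ∃ ε : ℝ, 0 < ε ∧ ε < sMf k ∧ ∀ s : ℝ, |s| < ε → Lf H k s ≠ 0 := by
  have hcont : ContinuousAt (Lf H k) 0 :=
    (contDiffOn_Lf hk hH).continuousOn.continuousAt (isOpen_Iio.mem_nhds (hsM_pos hk))
  have hmem : {y : ℝ | y ≠ 0} ∈ nhds (Lf H k 0) := isOpen_ne.mem_nhds (L0_ne hk hH)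
  have h2 := hcont.preimage_mem_nhds hmem
  rw [Metric.mem_nhds_iff] at h2
  obtain ⟨ε₀, hε₀, hsub⟩ := h2
  have hsM := hsM_pos (k := k) hk
  refine ⟨min (ε₀ / 2) (sMf k / 2), by positivity, ?_, ?_⟩
  · exact lt_of_le_of_lt (min_le_right _ _) (by linarith)
  · intro s hs
    have : s ∈ Metric.ball (0:ℝ) ε₀ := by
      rw [Metric.mem_ball, Real.dist_eq, sub_zero]
      exact lt_of_lt_of_le hs (le_trans (min_le_left _ _) (by linarith))
    exact hsub this



lemma pd_X12 (hk : k < -1) (hH : H ≠ 0) {p : ℝ × ℝ} (hp : |p.1| < rbT k) :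
    pdU (X12 H k) p =
      ![(4 * (k + 1) * p.1 / (2 * Real.sqrt (ΔT k p.1)) / (2 * H * |k + 1|)) *
          Real.sinh (φ12 H k p.1 p.2) +
          ρ12 H k p.1 * Real.cosh (φ12 H k p.1 p.2) * (-(gIntg k p.1)),
        (4 * (k + 1) * p.1 / (2 * Real.sqrt (ΔT k p.1)) / (2 * H * |k + 1|)) *
          Real.cosh (φ12 H k p.1 p.2) +
          ρ12 H k p.1 * Real.sinh (φ12 H k p.1 p.2) * (-(gIntg k p.1)),
        lIntg H k p.1 + h12 H k * (-(gIntg k p.1))] ∧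
    pdV (X12 H k) p =
      ![ρ12 H k p.1 * Real.cosh (φ12 H k p.1 p.2) * (-(Real.sqrt (|1 + k| / 2))),
        ρ12 H k p.1 * Real.sinh (φ12 H k p.1 p.2) * (-(Real.sqrt (|1 + k| / 2))),
        h12 H k * (-(Real.sqrt (|1 + k| / 2)))] := by
  set fstL : ℝ × ℝ →L[ℝ] ℝ := ContinuousLinearMap.fst ℝ ℝ ℝ with hfstL
  set sndL : ℝ × ℝ →L[ℝ] ℝ := ContinuousLinearMap.snd ℝ ℝ ℝ with hsndL
  set g : ℝ := gIntg k p.1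
  set l : ℝ := lIntg H k p.1
  set β : ℝ := Real.sqrt (|1 + k| / 2)
  set dρ : ℝ := 4 * (k + 1) * p.1 / (2 * Real.sqrt (ΔT k p.1)) / (2 * H * |k + 1|)
  set φv : ℝ := φ12 H k p.1 p.2
  set S : ℝ := Real.sinh φv
  set C : ℝ := Real.cosh φv
  set dφ : ℝ × ℝ →L[ℝ] ℝ := -(g • fstL) - β • sndL with hdφ
  have hGd : HasFDerivAt (fun q : ℝ × ℝ => Gint k q.1) (g • fstL) p :=
    (hasDerivAt_Gint hk hp).comp_hasFDerivAt p hasFDerivAt_fst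
  have hφd : HasFDerivAt (fun q : ℝ × ℝ => φ12 H k q.1 q.2) dφ p := by
    have h1 : (fun q : ℝ × ℝ => φ12 H k q.1 q.2) =
        fun q : ℝ × ℝ => -(Gint k q.1) - β * q.2 := by
      funext q; rw [φ12_eq]
    rw [h1, hdφ]
    exact hGd.neg.sub (hasFDerivAt_snd.const_mul β)
  have hρd : HasFDerivAt (fun q : ℝ × ℝ => ρ12 H k q.1) (dρ • fstL) p :=
    (hasDerivAt_ρ12 hk hH hp).comp_hasFDerivAt p hasFDerivAt_fst
  have hld : HasFDerivAt (fun q : ℝ × ℝ => lam12 H k q.1) (l • fstL) p :=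
    (hasDerivAt_lam12 hk hH hp).comp_hasFDerivAt p hasFDerivAt_fst
  have h0 := hρd.mul hφd.sinh
  have h1 := hρd.mul hφd.cosh
  have h2 := hld.add (hφd.const_mul (h12 H k))
  set B0 : ℝ × ℝ →L[ℝ] ℝ := ρ12 H k p.1 • (C • dφ) + S • (dρ • fstL) with hB0
  set B1 : ℝ × ℝ →L[ℝ] ℝ := ρ12 H k p.1 • (S • dφ) + C • (dρ • fstL) with hB1
  set B2 : ℝ × ℝ →L[ℝ] ℝ := l • fstL + h12 H k • dφ with hB2
  have hXd : HasFDerivAt (X12 H k) (ContinuousLinearMap.pi ![B0, B1, B2]) p := by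
    have hpi := (hasFDerivAt_pi (x := p)
      (φ := ![fun q : ℝ × ℝ => ρ12 H k q.1 * Real.sinh (φ12 H k q.1 q.2),
              fun q : ℝ × ℝ => ρ12 H k q.1 * Real.cosh (φ12 H k q.1 q.2),
              fun q : ℝ × ℝ => lam12 H k q.1 + h12 H k * φ12 H k q.1 q.2])
      (φ' := ![B0, B1, B2])).2 ?_
    · have heq : (fun (x : ℝ × ℝ) (i : Fin 3) =>
          (![fun q : ℝ × ℝ => ρ12 H k q.1 * Real.sinh (φ12 H k q.1 q.2),
              fun q : ℝ × ℝ => ρ12 H k q.1 * Real.cosh (φ12 H k q.1 q.2),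
              fun q : ℝ × ℝ => lam12 H k q.1 + h12 H k * φ12 H k q.1 q.2]) i x) =
          X12 H k := by
        funext q i
        fin_cases i <;> simp [X12]
      rwa [heq] at hpi
    · intro i
      fin_cases i
      · exact h0
      · exact h1
      · exact h2
  have hfd : fderiv ℝ (X12 H k) p = ContinuousLinearMap.pi ![B0, B1, B2] := hXd.fderiv
  constructor
  · funext i
    rw [pdU, hfd]
    fin_cases i <;>
      simp [ContinuousLinearMap.pi_apply, hB0, hB1, hB2, hdφ,
        ContinuousLinearMap.add_apply, ContinuousLinearMap.smul_apply,
        ContinuousLinearMap.neg_apply, ContinuousLinearMap.sub_apply,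
        hfstL, hsndL, smul_eq_mul] <;> ring
  · funext i
    rw [pdV, hfd]
    fin_cases i <;>
      simp [ContinuousLinearMap.pi_apply, hB0, hB1, hB2, hdφ,
        ContinuousLinearMap.add_apply, ContinuousLinearMap.smul_apply,
        ContinuousLinearMap.neg_apply, ContinuousLinearMap.sub_apply,
        hfstL, hsndL, smul_eq_mul] <;> ring

lemma gIntg_zero : gIntg k 0 = 0 := by unfold gIntg; norm_num

lemma lIntg_zero : lIntg H k 0 = 0 := by unfold lIntg; norm_num

lemma ρ12_ne (hk : k < -1) (hH : H ≠ 0) {r : ℝ} (hr : |r| < rbT k) : ρ12 H k r ≠ 0 := by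
  apply div_ne_zero (Real.sqrt_pos.2 (ΔT_pos hk hr)).ne'
  have : |k + 1| = |1 + k| := by rw [add_comm]
  rw [this]
  exact mul_ne_zero (mul_ne_zero two_ne_zero hH) (hA_pos hk).ne'

lemma β_pos (hk : k < -1) : 0 < Real.sqrt (|1 + k| / 2) :=
  Real.sqrt_pos.2 (by have := hA_pos (k := k) hk; linarith)

lemma singular_iff_aux (hk : k < -1) (hH : H ≠ 0) {p : ℝ × ℝ} (hp : |p.1| < rbT k) :
    IsSingularPt (X12 H k) p ↔ p.1 = 0 := by
  obtain ⟨hu, hv⟩ := pd_X12 hk hH hp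
  constructor
  · intro hsing
    by_contra hne
    apply hsing
    rw [hu, hv]
    rw [LinearIndependent.pair_iff]
    intro a b hab
    have e0 := congr_fun hab 0
    have e1 := congr_fun hab 1
    simp only [Pi.add_apply, Pi.smul_apply, smul_eq_mul, Matrix.cons_val_zero,
      Matrix.cons_val_one, Matrix.head_cons, Pi.zero_apply] at e0 e1
    set dρ : ℝ := 4 * (k + 1) * p.1 / (2 * Real.sqrt (ΔT k p.1)) / (2 * H * |k + 1|) with hdρ
    set S : ℝ := Real.sinh (φ12 H k p.1 p.2)
    set C : ℝ := Real.cosh (φ12 H k p.1 p.2)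
    have hcs : C ^ 2 - S ^ 2 = 1 := Real.cosh_sq_sub_sinh_sq _
    have ha : a * dρ = 0 := by linear_combination C * e1 - S * e0 - a * dρ * hcs
    have hdρne : dρ ≠ 0 := by
      rw [hdρ]
      apply div_ne_zero (div_ne_zero ?_ ?_) ?_
      · exact mul_ne_zero (mul_ne_zero (by norm_num) (by intro h; apply hne; linarith)) hne
      · exact mul_ne_zero two_ne_zero (Real.sqrt_pos.2 (ΔT_pos hk hp)).ne'
      · have : |k + 1| = |1 + k| := by rw [add_comm]
        rw [this]
        exact mul_ne_zero (mul_ne_zero two_ne_zero hH) (hA_pos hk).ne'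
    have ha0 : a = 0 := by
      rcases mul_eq_zero.1 ha with h | h
      · exact h
      · exact absurd h hdρne
    rw [ha0] at e0
    have hbz : b * (ρ12 H k p.1 * C * -Real.sqrt (|1 + k| / 2)) = 0 := by linarith
    have hfac : ρ12 H k p.1 * C * -Real.sqrt (|1 + k| / 2) ≠ 0 := by
      apply mul_ne_zero (mul_ne_zero (ρ12_ne hk hH hp) (Real.cosh_pos _).ne')
      exact neg_ne_zero.2 (β_pos hk).ne'
    have hb0 : b = 0 := by
      rcases mul_eq_zero.1 hbz with h | h
      · exact h
      · exact absurd h hfac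
    exact ⟨ha0, hb0⟩
  · intro h0
    intro hLI
    have hz := hLI.ne_zero 0
    apply hz
    rw [Matrix.cons_val_zero, hu, h0]
    funext i
    fin_cases i <;> simp [gIntg_zero, lIntg_zero]


def sfun (H k : ℝ) (w : Fin 3 → ℝ) : ℝ :=
  ((1 - k) ^ 2 - 4 * H ^ 2 * |1 + k| ^ 2 * ((w 1) ^ 2 - (w 0) ^ 2)) / (2 * |1 + k|)

def uuf (w : Fin 3 → ℝ) : ℝ := Real.log ((w 1 + w 0) / (w 1 - w 0)) / 2

def Φf (H k cc : ℝ) (w : Fin 3 → ℝ) : Fin 3 → ℝ :=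
  ![uuf w - cc, sfun H k w, (w 2 - h12 H k * uuf w) / Lf H k (sfun H k w)]

def Ψf (H k cc : ℝ) (m : Fin 3 → ℝ) : Fin 3 → ℝ :=
  ![Real.sqrt (Δsf k (m 1)) / (2 * H * |1 + k|) * Real.sinh (m 0 + cc),
    Real.sqrt (Δsf k (m 1)) / (2 * H * |1 + k|) * Real.cosh (m 0 + cc),
    m 2 * Lf H k (m 1) + h12 H k * (m 0 + cc)]

def sSet (H k ε : ℝ) : Set (Fin 3 → ℝ) :=
  {w | |w 0| < |w 1| ∧ 0 < H * w 1 ∧ sfun H k w ∈ Ioo (-ε) ε}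

def tSet (ε : ℝ) : Set (Fin 3 → ℝ) := {m | m 1 ∈ Ioo (-ε) ε}

lemma abs_sinh_lt_cosh' (x : ℝ) : |Real.sinh x| < Real.cosh x := by
  apply abs_lt.2
  constructor
  · have h := Real.sinh_lt_cosh (x := -x)
    rw [Real.sinh_neg, Real.cosh_neg] at h
    linarith
  · exact Real.sinh_lt_cosh x

lemma pos_sq_eq {a b : ℝ} (ha : 0 < a) (hb : 0 < b) (h : a ^ 2 = b ^ 2) : a = b := by
  have h1 : (a - b) * (a + b) = 0 := by linear_combination h
  rcases mul_eq_zero.1 h1 with h2 | h2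
  · linarith
  · linarith

lemma sSet_open (H k ε : ℝ) : IsOpen (sSet H k ε) := by
  have h1 : IsOpen {w : Fin 3 → ℝ | |w 0| < |w 1|} :=
    isOpen_lt ((continuous_apply 0).abs) ((continuous_apply 1).abs)
  have h2 : IsOpen {w : Fin 3 → ℝ | 0 < H * w 1} :=
    isOpen_lt continuous_const (continuous_const.mul (continuous_apply 1))
  have hc : Continuous (sfun H k) := by
    unfold sfun; fun_prop
  have h3 : IsOpen (sfun H k ⁻¹' Ioo (-ε) ε) := isOpen_Ioo.preimage hc
  have : sSet H k ε =
      {w : Fin 3 → ℝ | |w 0| < |w 1|} ∩ ({w : Fin 3 → ℝ | 0 < H * w 1} ∩ sfun H k ⁻¹' Ioo (-ε) ε) := rfl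
  rw [this]
  exact h1.inter (h2.inter h3)

lemma tSet_open (ε : ℝ) : IsOpen (tSet ε) :=
  isOpen_Ioo.preimage (continuous_apply 1)


lemma aux_cancel {a b c : ℝ} (ha : a ≠ 0) : a * (b / (2 * a * c)) = b / (2 * c) := by
  rw [mul_div_assoc', show 2 * a * c = a * (2 * c) by ring, mul_div_mul_left _ _ ha]

lemma hHA_ne (hk : k < -1) (hH : H ≠ 0) : 2 * H * |1 + k| ≠ 0 :=
  mul_ne_zero (mul_ne_zero two_ne_zero hH) (hA_pos hk).ne'

lemma sSet_facts {H k ε : ℝ} {w : Fin 3 → ℝ} (hw : w ∈ sSet H k ε) :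
    w 1 - w 0 ≠ 0 ∧ 0 < (w 1) ^ 2 - (w 0) ^ 2 ∧ 0 < (w 1 + w 0) / (w 1 - w 0) := by
  obtain ⟨h1, -, -⟩ := hw
  have hsq : (w 0) ^ 2 < (w 1) ^ 2 := by
    rw [← sq_abs (w 0), ← sq_abs (w 1)]
    exact pow_lt_pow_left₀ h1 (abs_nonneg _) (by norm_num)
  have hne : w 1 - w 0 ≠ 0 := by
    intro h
    rw [sub_eq_zero.1 h] at h1
    exact lt_irrefl _ h1
  refine ⟨hne, by linarith, ?_⟩
  have heq : (w 1 + w 0) / (w 1 - w 0) = ((w 1) ^ 2 - (w 0) ^ 2) / (w 1 - w 0) ^ 2 := by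
    rw [div_eq_div_iff hne (pow_ne_zero 2 hne)]; ring
  rw [heq]
  apply div_pos (by linarith)
  rw [← sq_abs]
  exact pow_pos (abs_pos.2 hne) 2

lemma hproj3 : ∀ i : Fin 3, ContDiff ℝ (⊤:ℕ∞) (fun w : Fin 3 → ℝ => w i) := fun i =>
  (ContinuousLinearMap.proj (R := ℝ) (φ := fun _ : Fin 3 => ℝ) i).contDiff

lemma uuf_contDiffOn {H k ε : ℝ} : ContDiffOn ℝ (⊤:ℕ∞) uuf (sSet H k ε) := by
  intro w hw
  obtain ⟨hne, -, hpos⟩ := sSet_facts hw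
  have hr : ContDiffAt ℝ (⊤:ℕ∞) (fun w : Fin 3 → ℝ => (w 1 + w 0) / (w 1 - w 0)) w :=
    (((hproj3 1).add (hproj3 0)).contDiffAt).div (((hproj3 1).sub (hproj3 0)).contDiffAt) hne
  exact (((Real.contDiffAt_log.2 hpos.ne').comp w hr).div_const 2).contDiffWithinAt

lemma sfun_contDiff {H k : ℝ} : ContDiff ℝ (⊤:ℕ∞) (sfun H k) := by
  unfold sfun
  exact ContDiff.div_const (by fun_prop) _

lemma sfun_mem_Iio {H k ε : ℝ} (hεsM : ε < sMf k) {w : Fin 3 → ℝ} (hw : w ∈ sSet H k ε) :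
    sfun H k w ∈ Iio (sMf k) := lt_trans hw.2.2.2 hεsM

lemma Φf_contDiffOn (hk : k < -1) (hH : H ≠ 0) {cc ε : ℝ} (hεsM : ε < sMf k)
    (hLne : ∀ s : ℝ, |s| < ε → Lf H k s ≠ 0) :
    ContDiffOn ℝ (⊤:ℕ∞) (Φf H k cc) (sSet H k ε) := by
  have hpi : ∀ i : Fin 3, ContDiffOn ℝ (⊤:ℕ∞) (fun w => Φf H k cc w i) (sSet H k ε) := by
    intro i
    fin_cases i
    · simp only [Φf, Matrix.cons_val_zero]
      exact uuf_contDiffOn.sub contDiffOn_const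
    · simp only [Φf, Matrix.cons_val_one, Matrix.head_cons]
      exact sfun_contDiff.contDiffOn
    · show ContDiffOn ℝ (⊤:ℕ∞)
        (fun w => (w 2 - h12 H k * uuf w) / Lf H k (sfun H k w)) (sSet H k ε)
      apply ContDiffOn.div
      · exact ((hproj3 2).contDiffOn).sub (contDiffOn_const.mul uuf_contDiffOn)
      · exact (contDiffOn_Lf hk hH).comp sfun_contDiff.contDiffOn
          fun w hw => sfun_mem_Iio hεsM hw
      · exact fun w hw => hLne _ (abs_lt.2 ⟨hw.2.2.1, hw.2.2.2⟩)
  have : (fun (w : Fin 3 → ℝ) (i : Fin 3) => Φf H k cc w i) = Φf H k cc := rfl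
  rw [← this]
  exact contDiffOn_pi.2 hpi

lemma Ψf_contDiffOn (hk : k < -1) (hH : H ≠ 0) {cc ε : ℝ} (hεsM : ε < sMf k) :
    ContDiffOn ℝ (⊤:ℕ∞) (Ψf H k cc) (tSet ε) := by
  have hΔ : ∀ m : Fin 3 → ℝ, m ∈ tSet ε → Δsf k (m 1) ≠ 0 := by
    intro m hm
    exact (hΔsf_pos hk (lt_trans hm.2 hεsM)).ne'
  have hsqrt : ContDiffOn ℝ (⊤:ℕ∞) (fun m : Fin 3 → ℝ => Real.sqrt (Δsf k (m 1))) (tSet ε) := by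
    intro m hm
    have hin : ContDiffAt ℝ (⊤:ℕ∞) (fun m : Fin 3 → ℝ => Δsf k (m 1)) m :=
      ContDiff.contDiffAt (by unfold Δsf; fun_prop)
    exact ((Real.contDiffAt_sqrt (hΔ m hm)).comp m hin).contDiffWithinAt
  have hrr : ContDiffOn ℝ (⊤:ℕ∞)
      (fun m : Fin 3 → ℝ => Real.sqrt (Δsf k (m 1)) / (2 * H * |1 + k|)) (tSet ε) :=
    hsqrt.div_const _
  have hL : ContDiffOn ℝ (⊤:ℕ∞) (fun m : Fin 3 → ℝ => Lf H k (m 1)) (tSet ε) :=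
    (contDiffOn_Lf hk hH).comp ((hproj3 1).contDiffOn)
      fun m hm => lt_trans hm.2 hεsM
  have hsinh : ContDiffOn ℝ (⊤:ℕ∞) (fun m : Fin 3 → ℝ => Real.sinh (m 0 + cc)) (tSet ε) :=
    (Real.contDiff_sinh.comp ((hproj3 0).add contDiff_const)).contDiffOn
  have hcosh : ContDiffOn ℝ (⊤:ℕ∞) (fun m : Fin 3 → ℝ => Real.cosh (m 0 + cc)) (tSet ε) :=
    (Real.contDiff_cosh.comp ((hproj3 0).add contDiff_const)).contDiffOn
  have hpi : ∀ i : Fin 3, ContDiffOn ℝ (⊤:ℕ∞) (fun m => Ψf H k cc m i) (tSet ε) := by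
    intro i
    fin_cases i
    · exact hrr.mul hsinh
    · exact hrr.mul hcosh
    · exact (((hproj3 2).contDiffOn).mul hL).add
        (contDiffOn_const.mul (((hproj3 0).add contDiff_const).contDiffOn))
  have : (fun (m : Fin 3 → ℝ) (i : Fin 3) => Ψf H k cc m i) = Ψf H k cc := rfl
  rw [← this]
  exact contDiffOn_pi.2 hpi

lemma Ψf_props (hk : k < -1) (hH : H ≠ 0) {cc ε : ℝ} (hεsM : ε < sMf k)
    (hLne : ∀ s : ℝ, |s| < ε → Lf H k s ≠ 0) {m : Fin 3 → ℝ} (hm : m ∈ tSet ε) :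
    Ψf H k cc m ∈ sSet H k ε ∧ Φf H k cc (Ψf H k cc m) = m := by
  have hs : m 1 ∈ Ioo (-ε) ε := hm
  have hΔpos : 0 < Δsf k (m 1) := hΔsf_pos hk (lt_trans hs.2 hεsM)
  have hQ : 0 < Real.sqrt (Δsf k (m 1)) := Real.sqrt_pos.2 hΔpos
  set u₁ : ℝ := m 0 + cc with hu₁
  set rr : ℝ := Real.sqrt (Δsf k (m 1)) / (2 * H * |1 + k|) with hrr_def
  have hrr_ne : rr ≠ 0 := div_ne_zero hQ.ne' (hHA_ne hk hH)
  have hHrr : 0 < H * rr := by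
    have he : H * rr = Real.sqrt (Δsf k (m 1)) / (2 * |1 + k|) := by
      rw [hrr_def]; exact aux_cancel hH
    rw [he]
    exact div_pos hQ (by have := hA_pos (k := k) hk; linarith)
  have hΨ0 : Ψf H k cc m 0 = rr * Real.sinh u₁ := rfl
  have hΨ1 : Ψf H k cc m 1 = rr * Real.cosh u₁ := rfl
  have hΨ2 : Ψf H k cc m 2 = m 2 * Lf H k (m 1) + h12 H k * u₁ := rfl
  have hrr2 : rr ^ 2 * (2 * H * |1 + k|) ^ 2 = Δsf k (m 1) := by
    rw [hrr_def, div_pow, div_mul_cancel₀ _ (pow_ne_zero 2 (hHA_ne hk hH))]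
    exact Real.sq_sqrt hΔpos.le
  have hcs := Real.cosh_sq_sub_sinh_sq u₁
  have hsfeq : sfun H k (Ψf H k cc m) = m 1 := by
    rw [sfun, hΨ0, hΨ1]
    rw [div_eq_iff (mul_ne_zero two_ne_zero (hA_pos hk).ne')]
    rw [habsk hk] at hrr2 ⊢
    have hΔdef : Δsf k (m 1) = 2 * (k + 1) * m 1 + (1 - k) ^ 2 := rfl
    rw [hΔdef] at hrr2
    linear_combination (-(4 * H ^ 2 * (1 + k) ^ 2 * rr ^ 2)) * hcs - hrr2
  have hmem : Ψf H k cc m ∈ sSet H k ε := by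
    refine ⟨?_, ?_, ?_⟩
    · rw [hΨ0, hΨ1, abs_mul, abs_mul, abs_of_pos (Real.cosh_pos u₁)]
      exact mul_lt_mul_of_pos_left (abs_sinh_lt_cosh' u₁) (abs_pos.2 hrr_ne)
    · rw [hΨ1, ← mul_assoc]
      exact mul_pos hHrr (Real.cosh_pos u₁)
    · rw [hsfeq]; exact hs
  have hyx : (Ψf H k cc m 1 + Ψf H k cc m 0) / (Ψf H k cc m 1 - Ψf H k cc m 0) =
      Real.exp (2 * u₁) := by
    rw [hΨ0, hΨ1]
    rw [show rr * Real.cosh u₁ + rr * Real.sinh u₁ = rr * Real.exp u₁ by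
      rw [← Real.cosh_add_sinh]; ring]
    rw [show rr * Real.cosh u₁ - rr * Real.sinh u₁ = rr * Real.exp (-u₁) by
      rw [← Real.cosh_sub_sinh]; ring]
    rw [mul_div_mul_left _ _ hrr_ne, ← Real.exp_sub]
    ring_nf
  have huu : uuf (Ψf H k cc m) = u₁ := by
    rw [uuf, hyx, Real.log_exp]; ring
  refine ⟨hmem, ?_⟩
  funext i
  fin_cases i
  · show uuf (Ψf H k cc m) - cc = m 0
    rw [huu, hu₁]; ring
  · show sfun H k (Ψf H k cc m) = m 1
    exact hsfeq
  · show (Ψf H k cc m 2 - h12 H k * uuf (Ψf H k cc m)) / Lf H k (sfun H k (Ψf H k cc m)) = m 2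
    rw [huu, hsfeq, hΨ2, add_sub_cancel_right]
    exact mul_div_cancel_right₀ _ (hLne _ (abs_lt.2 ⟨hs.1, hs.2⟩))


lemma ΨΦ_id (hk : k < -1) (hH : H ≠ 0) {cc ε : ℝ} (hεsM : ε < sMf k)
    (hLne : ∀ s : ℝ, |s| < ε → Lf H k s ≠ 0) {w : Fin 3 → ℝ} (hw : w ∈ sSet H k ε) :
    Ψf H k cc (Φf H k cc w) = w := by
  obtain ⟨hne, hy2x2, hR⟩ := sSet_facts hw
  obtain ⟨h01, hHy, hsIoo⟩ := hw
  have hA := hA_pos (k := k) hk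
  obtain ⟨σ, hσσ, hσH⟩ : ∃ σ : ℝ, σ ^ 2 = 1 ∧ σ * H = |H| := by
    rcases le_or_gt 0 H with h | h
    · exact ⟨1, by norm_num, by rw [abs_of_nonneg h]; ring⟩
    · exact ⟨-1, by norm_num, by rw [abs_of_neg h]; ring⟩
  have habsH : 0 < |H| := abs_pos.2 hH
  have hσne : σ ≠ 0 := by
    intro h; rw [h] at hσσ; norm_num at hσσ
  have habsσ : |σ| = 1 :=
    pos_sq_eq (abs_pos.2 hσne) one_pos (by rw [sq_abs, hσσ]; norm_num)
  have hσy : 0 < σ * w 1 := by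
    have h1 : σ * w 1 * H ^ 2 = |H| * (H * w 1) := by linear_combination (H * w 1) * hσH
    by_contra h
    push_neg at h
    nlinarith [mul_pos habsH hHy, sq_nonneg H]
  have habs_y : |w 1| = σ * w 1 := by
    rw [← abs_of_pos hσy, abs_mul, habsσ, one_mul]
  have habs_x : |σ * w 0| = |w 0| := by rw [abs_mul, habsσ, one_mul]
  have hσx_ge : -|w 0| ≤ σ * w 0 := by
    have := neg_abs_le (σ * w 0); rw [habs_x] at this; exact this
  have hσx_le : σ * w 0 ≤ |w 0| := by
    have := le_abs_self (σ * w 0); rw [habs_x] at this; exact this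
  have hyx_pos : 0 < σ * (w 1 + w 0) := by
    have h2 : σ * (w 1 + w 0) = σ * w 1 + σ * w 0 := by ring
    rw [h2]; rw [habs_y] at h01; linarith
  have hymx_pos : 0 < σ * (w 1 - w 0) := by
    have h2 : σ * (w 1 - w 0) = σ * w 1 - σ * w 0 := by ring
    rw [h2]; rw [habs_y] at h01; linarith
  -- Δsf at s
  have hΔeq : Δsf k (sfun H k w) =
      4 * H ^ 2 * |1 + k| ^ 2 * ((w 1) ^ 2 - (w 0) ^ 2) := by
    have hΔdef : Δsf k (sfun H k w) = 2 * (k + 1) * sfun H k w + (1 - k) ^ 2 := rfl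
    have hs2 : sfun H k w * (2 * |1 + k|) =
        (1 - k) ^ 2 - 4 * H ^ 2 * |1 + k| ^ 2 * ((w 1) ^ 2 - (w 0) ^ 2) := by
      rw [sfun, div_mul_cancel₀]
      exact mul_ne_zero two_ne_zero hA.ne'
    rw [hΔdef]
    rw [habsk hk] at hs2 ⊢
    linear_combination (-1 : ℝ) * hs2
  set Q : ℝ := Real.sqrt ((w 1) ^ 2 - (w 0) ^ 2) with hQ_def
  have hQpos : 0 < Q := Real.sqrt_pos.2 hy2x2
  have hQ2 : Q ^ 2 = (w 1) ^ 2 - (w 0) ^ 2 := Real.sq_sqrt hy2x2.le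
  have hsqrtΔ : Real.sqrt (Δsf k (sfun H k w)) = 2 * |H| * |1 + k| * Q := by
    rw [hΔeq, show 4 * H ^ 2 * |1 + k| ^ 2 * ((w 1) ^ 2 - (w 0) ^ 2) =
      (2 * |H| * |1 + k|) ^ 2 * ((w 1) ^ 2 - (w 0) ^ 2) by
        rw [mul_pow, mul_pow, sq_abs, sq_abs]; ring]
    rw [Real.sqrt_mul (by positivity), Real.sqrt_sq (by positivity), hQ_def]
  have hrr : Real.sqrt (Δsf k (sfun H k w)) / (2 * H * |1 + k|) = σ * Q := by
    rw [hsqrtΔ, div_eq_iff (hHA_ne hk hH)]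
    linear_combination (-(2 * Q * |1 + k|)) * hσH
  -- E
  set E : ℝ := Real.exp (uuf w) with hE_def
  have hEpos : 0 < E := Real.exp_pos _
  have hE2 : E ^ 2 = (w 1 + w 0) / (w 1 - w 0) := by
    have h3 : E ^ 2 = Real.exp (uuf w + uuf w) := by rw [Real.exp_add, hE_def]; ring
    rw [h3, show uuf w + uuf w = Real.log ((w 1 + w 0) / (w 1 - w 0)) by rw [uuf]; ring,
      Real.exp_log hR]
  have hE : E = σ * (w 1 + w 0) / Q := by
    apply pos_sq_eq hEpos (div_pos hyx_pos hQpos)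
    rw [hE2, div_pow, hQ2, mul_pow, hσσ, one_mul,
      div_eq_div_iff hne hy2x2.ne']
    ring
  have hEinv : E⁻¹ = σ * (w 1 - w 0) / Q := by
    apply inv_eq_of_mul_eq_one_right
    rw [hE, div_mul_div_comm,
      show σ * (w 1 + w 0) * (σ * (w 1 - w 0)) = σ ^ 2 * ((w 1) ^ 2 - (w 0) ^ 2) by ring,
      hσσ, one_mul, show Q * Q = Q ^ 2 by ring, hQ2, div_self hy2x2.ne']
  have hsinh : Real.sinh (uuf w) = (E - E⁻¹) / 2 := by
    rw [Real.sinh_eq, hE_def, Real.exp_neg]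
  have hcosh : Real.cosh (uuf w) = (E + E⁻¹) / 2 := by
    rw [Real.cosh_eq, hE_def, Real.exp_neg]
  have hsabs : |sfun H k w| < ε := abs_lt.2 ⟨hsIoo.1, hsIoo.2⟩
  funext i
  fin_cases i
  · show Real.sqrt (Δsf k (Φf H k cc w 1)) / (2 * H * |1 + k|) *
      Real.sinh (Φf H k cc w 0 + cc) = w 0
    have e0 : Φf H k cc w 0 + cc = uuf w := by
      show uuf w - cc + cc = uuf w; ring
    have e1 : Φf H k cc w 1 = sfun H k w := rfl
    rw [e0, e1, hrr, hsinh, hEinv, hE, div_sub_div_same,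
      show σ * (w 1 + w 0) - σ * (w 1 - w 0) = σ * (2 * w 0) by ring]
    rw [div_div, mul_div_assoc',
      show σ * Q * (σ * (2 * w 0)) = σ ^ 2 * (w 0 * (Q * 2)) by ring, hσσ, one_mul,
      mul_div_cancel_right₀ _ (by positivity : Q * 2 ≠ 0)]
  · show Real.sqrt (Δsf k (Φf H k cc w 1)) / (2 * H * |1 + k|) *
      Real.cosh (Φf H k cc w 0 + cc) = w 1
    have e0 : Φf H k cc w 0 + cc = uuf w := by
      show uuf w - cc + cc = uuf w; ring
    have e1 : Φf H k cc w 1 = sfun H k w := rfl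
    rw [e0, e1, hrr, hcosh, hEinv, hE, ← add_div,
      show σ * (w 1 + w 0) + σ * (w 1 - w 0) = σ * (2 * w 1) by ring]
    rw [div_div, mul_div_assoc',
      show σ * Q * (σ * (2 * w 1)) = σ ^ 2 * (w 1 * (Q * 2)) by ring, hσσ, one_mul,
      mul_div_cancel_right₀ _ (by positivity : Q * 2 ≠ 0)]
  · show Φf H k cc w 2 * Lf H k (Φf H k cc w 1) + h12 H k * (Φf H k cc w 0 + cc) = w 2
    have e0 : Φf H k cc w 0 + cc = uuf w := by
      show uuf w - cc + cc = uuf w; ring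
    have e1 : Φf H k cc w 1 = sfun H k w := rfl
    have e2 : Φf H k cc w 2 = (w 2 - h12 H k * uuf w) / Lf H k (sfun H k w) := rfl
    rw [e0, e1, e2, div_mul_cancel₀ _ (hLne _ hsabs)]
    ring


lemma X_image (hk : k < -1) (hH : H ≠ 0) {cc ε : ℝ} (hε0 : 0 < ε)
    (hLne : ∀ s : ℝ, |s| < ε → Lf H k s ≠ 0) {u v : ℝ}
    (hv : |v| < rbT k) (hv2 : v ^ 2 < ε) :
    X12 H k (v, -(u + cc + Gint k v) / Real.sqrt (|1 + k| / 2)) ∈ sSet H k ε ∧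
    Φf H k cc (X12 H k (v, -(u + cc + Gint k v) / Real.sqrt (|1 + k| / 2))) =
      ![u, v ^ 2, v ^ 5] := by
  have hA := hA_pos (k := k) hk
  have hβ := β_pos (k := k) hk
  set tv : ℝ := -(u + cc + Gint k v) / Real.sqrt (|1 + k| / 2) with htv
  have hφval : φ12 H k v tv = u + cc := by
    rw [φ12_eq, htv]
    field_simp
    ring
  set X : Fin 3 → ℝ := X12 H k (v, tv) with hX_def
  have hΔpos : 0 < ΔT k v := ΔT_pos hk hv
  have hρne : ρ12 H k v ≠ 0 := ρ12_ne hk hH hv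
  have hX0 : X 0 = ρ12 H k v * Real.sinh (u + cc) := by rw [hX_def, X12, hφval]; rfl
  have hX1 : X 1 = ρ12 H k v * Real.cosh (u + cc) := by rw [hX_def, X12, hφval]; rfl
  have hX2 : X 2 = lam12 H k v + h12 H k * (u + cc) := by rw [hX_def, X12, hφval]; rfl
  have hAk : |k + 1| = |1 + k| := by rw [add_comm]
  have hρsq : (ρ12 H k v) ^ 2 * (2 * H * |1 + k|) ^ 2 = ΔT k v := by
    rw [ρ12, hAk, div_pow, div_mul_cancel₀ _ (pow_ne_zero 2 (hHA_ne hk hH))]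
    exact Real.sq_sqrt hΔpos.le
  have hHρ : 0 < H * ρ12 H k v := by
    rw [ρ12, hAk, aux_cancel hH]
    exact div_pos (Real.sqrt_pos.2 hΔpos) (by linarith)
  have hcs := Real.cosh_sq_sub_sinh_sq (u + cc)
  have hsfX : sfun H k X = v ^ 2 := by
    rw [sfun, hX0, hX1]
    rw [div_eq_iff (mul_ne_zero two_ne_zero hA.ne')]
    rw [habsk hk] at hρsq ⊢
    have hΔdef : ΔT k v = 2 * (k + 1) * v ^ 2 + (1 - k) ^ 2 := rfl
    rw [hΔdef] at hρsq
    linear_combination (-(4 * H ^ 2 * (1 + k) ^ 2 * (ρ12 H k v) ^ 2)) * hcs - hρsq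
  have hmem : X ∈ sSet H k ε := by
    refine ⟨?_, ?_, ?_⟩
    · rw [hX0, hX1, abs_mul, abs_mul, abs_of_pos (Real.cosh_pos _)]
      exact mul_lt_mul_of_pos_left (abs_sinh_lt_cosh' _) (abs_pos.2 hρne)
    · rw [hX1, ← mul_assoc]
      exact mul_pos hHρ (Real.cosh_pos _)
    · rw [hsfX]
      exact ⟨by nlinarith [sq_nonneg v], hv2⟩
  have hyx : (X 1 + X 0) / (X 1 - X 0) = Real.exp (2 * (u + cc)) := by
    rw [hX0, hX1]
    rw [show ρ12 H k v * Real.cosh (u + cc) + ρ12 H k v * Real.sinh (u + cc) =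
      ρ12 H k v * Real.exp (u + cc) by rw [← Real.cosh_add_sinh]; ring]
    rw [show ρ12 H k v * Real.cosh (u + cc) - ρ12 H k v * Real.sinh (u + cc) =
      ρ12 H k v * Real.exp (-(u + cc)) by rw [← Real.cosh_sub_sinh]; ring]
    rw [mul_div_mul_left _ _ hρne, ← Real.exp_sub]
    ring_nf
  have huuX : uuf X = u + cc := by
    rw [uuf, hyx, Real.log_exp]; ring
  have hv2abs : |v ^ 2| < ε := by rw [abs_of_nonneg (sq_nonneg v)]; exact hv2
  refine ⟨hmem, ?_⟩
  funext i
  fin_cases i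
  · show uuf X - cc = u
    rw [huuX]; ring
  · exact hsfX
  · show (X 2 - h12 H k * uuf X) / Lf H k (sfun H k X) = v ^ 5
    rw [huuX, hsfX, hX2, add_sub_cancel_right, lam_eq_L]
    exact mul_div_cancel_right₀ _ (hLne _ hv2abs)


lemma cusp_main (hk : k < -1) (hH : H ≠ 0) {p : ℝ × ℝ} (hp1 : p.1 = 0) :
    IsCuspidalEdge25 (D12 k) (X12 H k) p := by
  obtain ⟨ε, hε0, hεsM, hLne⟩ := exists_eps (k := k) (H := H) hk hH
  have hA := hA_pos (k := k) hk
  have hβ := β_pos (k := k) hk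
  set β : ℝ := Real.sqrt (|1 + k| / 2) with hβ_def
  set cc : ℝ := φ12 H k p.1 p.2 with hcc_def
  set r₁ : ℝ := Real.sqrt ε with hr₁_def
  have hr₁0 : 0 < r₁ := Real.sqrt_pos.2 hε0
  have hrb_eq : rbT k = Real.sqrt (sMf k) := by
    rw [sMf, rbT, Real.sqrt_div (sq_nonneg (1 - k)),
      Real.sqrt_sq (by linarith : (0:ℝ) ≤ 1 - k)]
  have hr₁rb : r₁ < rbT k := by
    rw [hrb_eq, hr₁_def]
    exact Real.sqrt_lt_sqrt hε0.le hεsM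
  have hv_facts : ∀ v : ℝ, |v| < r₁ → |v| < rbT k ∧ v ^ 2 < ε := by
    intro v hvr
    refine ⟨lt_trans hvr hr₁rb, ?_⟩
    have h1 : |v| ^ 2 < r₁ ^ 2 := pow_lt_pow_left₀ hvr (abs_nonneg v) (by norm_num)
    rw [sq_abs, hr₁_def, Real.sq_sqrt hε0.le] at h1
    exact h1
  set src : Set (ℝ × ℝ) := {w : ℝ × ℝ | |w.2| < r₁} with hsrc_def
  set tgt : Set (ℝ × ℝ) := {q : ℝ × ℝ | |q.1| < r₁} with htgt_def
  set φs : ℝ × ℝ → ℝ × ℝ := fun w => (w.2, -(w.1 + cc + Gint k w.2) / β) with hφs_def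
  set φsi : ℝ × ℝ → ℝ × ℝ := fun q => (-(β * q.2) - cc - Gint k q.1, q.1) with hφsi_def
  have hsrc_open : IsOpen src := isOpen_lt (continuous_snd.abs) continuous_const
  have htgt_open : IsOpen tgt := isOpen_lt (continuous_fst.abs) continuous_const
  have hsrc_mapsTo : MapsTo φs src tgt := fun w hw => hw
  have htgt_mapsTo : MapsTo φsi tgt src := fun q hq => hq
  have hGin : ∀ w : ℝ × ℝ, w ∈ src → w.2 ∈ Ioo (-rbT k) (rbT k) :=
    fun w hw => abs_lt.1 (lt_trans hw hr₁rb)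
  have hGin' : ∀ q : ℝ × ℝ, q ∈ tgt → q.1 ∈ Ioo (-rbT k) (rbT k) :=
    fun q hq => abs_lt.1 (lt_trans hq hr₁rb)
  have hφs_cd : ContDiffOn ℝ (⊤:ℕ∞) φs src := by
    apply ContDiffOn.prodMk
    · exact contDiff_snd.contDiffOn
    · apply ContDiffOn.div_const
      apply ContDiffOn.neg
      apply ContDiffOn.add
      · exact (contDiff_fst.contDiffOn).add contDiffOn_const
      · exact (contDiffOn_Gint hk).comp contDiff_snd.contDiffOn hGin
  have hφsi_cd : ContDiffOn ℝ (⊤:ℕ∞) φsi tgt := by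
    apply ContDiffOn.prodMk
    · apply ContDiffOn.sub
      · apply ContDiffOn.sub
        · exact (contDiffOn_const.mul contDiff_snd.contDiffOn).neg
        · exact contDiffOn_const
      · exact (contDiffOn_Gint hk).comp contDiff_fst.contDiffOn hGin'
    · exact contDiff_fst.contDiffOn
  have hleft : ∀ w ∈ src, φsi (φs w) = w := by
    intro w _
    have h1 : -(β * (-(w.1 + cc + Gint k w.2) / β)) - cc - Gint k w.2 = w.1 := by
      field_simp
      ring
    exact Prod.ext h1 rfl
  have hright : ∀ q ∈ tgt, φs (φsi q) = q := by
    intro q _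
    have h1 : -((-(β * q.2) - cc - Gint k q.1) + cc + Gint k q.1) / β = q.2 := by
      field_simp
      ring
    exact Prod.ext rfl h1
  have hG0 : Gint k 0 = 0 := intervalIntegral.integral_same
  have hφs00 : φs ((0:ℝ), (0:ℝ)) = p := by
    have hcc : cc = -(β * p.2) := by
      rw [hcc_def, hp1, φ12_eq, hG0]; ring
    apply Prod.ext
    · exact hp1.symm
    · show -((0:ℝ) + cc + Gint k 0) / β = p.2
      rw [hG0, hcc]
      field_simp
      ring
  have htsub : tgt ⊆ D12 k := fun q hq => lt_trans hq hr₁rb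
  have hkey : ∀ w ∈ src,
      X12 H k (φs w) ∈ sSet H k ε ∧ Φf H k cc (X12 H k (φs w)) = ![w.1, w.2 ^ 2, w.2 ^ 5] := by
    intro w hw
    obtain ⟨h1, h2⟩ := hv_facts w.2 hw
    exact X_image hk hH hε0 hLne h1 h2
  have h00src : ((0:ℝ), (0:ℝ)) ∈ src := by
    show |(0:ℝ)| < r₁
    simpa using hr₁0
  have hXp_mem : X12 H k p ∈ sSet H k ε := by
    have := (hkey _ h00src).1
    rwa [hφs00] at this
  refine ⟨src, tgt, φs, sSet H k ε, tSet ε, Φf H k cc, h00src, hφs00, htsub, ?_, hXp_mem,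
    ?_, hkey⟩
  · exact ⟨hsrc_open, htgt_open, hφs_cd,
      Set.InvOn.bijOn ⟨hleft, hright⟩ hsrc_mapsTo htgt_mapsTo, φsi, hφsi_cd, hleft, hright⟩
  · have hΨmaps : MapsTo (Ψf H k cc) (tSet ε) (sSet H k ε) :=
      fun m hm => (Ψf_props hk hH hεsM hLne hm).1
    have hΦmaps : MapsTo (Φf H k cc) (sSet H k ε) (tSet ε) := fun w hw => hw.2.2
    have hl : ∀ w ∈ sSet H k ε, Ψf H k cc (Φf H k cc w) = w :=
      fun w hw => ΨΦ_id hk hH hεsM hLne hw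
    have hr : ∀ m ∈ tSet ε, Φf H k cc (Ψf H k cc m) = m :=
      fun m hm => (Ψf_props hk hH hεsM hLne hm).2
    exact ⟨sSet_open H k ε, tSet_open ε, Φf_contDiffOn hk hH hεsM hLne,
      Set.InvOn.bijOn ⟨hl, hr⟩ hΦmaps hΨmaps, Ψf H k cc, Ψf_contDiffOn hk hH hεsM, hl, hr⟩

end CuspAux

/-- The singular points of the conjugate of a spacelike Delaunay surface with timelike
axis (`k < −1`) are exactly the points with `r = 0`, and every singular point is a
(2,5)-cuspidal edge. -/
theorem conj_delaunay_timelike_cuspidal25' (H k : ℝ) (hH : H ≠ 0) (hk : k < -1) :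
    (∀ r : ℝ, 0 < δT k r) ∧
    (∀ r : ℝ, |r| < (1 - k) / Real.sqrt (2 * |1 + k|) → 0 < ΔT k r) ∧
    (∀ p ∈ D12 k, (IsSingularPt (X12 H k) p ↔ p.1 = 0)) ∧
    (∀ p ∈ D12 k, IsSingularPt (X12 H k) p → IsCuspidalEdge25 (D12 k) (X12 H k) p) := by
  refine ⟨fun r => hδ_pos hk r, fun r hr => ΔT_pos hk hr, ?_, ?_⟩
  · exact fun p hp => singular_iff_aux hk hH hp
  · exact fun p hp hsing => cusp_main hk hH ((singular_iff_aux hk hH hp).1 hsing)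
end
end
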